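/- arXiv:1405.4093 — 5 statements merged into one kernel-verified Lean document; each statement's English description precedes it below -/
import Mathlib

section
/- Let H_n be the Heisenberg Lie algebra of dimension n = 2k+1 over a field F, with one-dimensional center spanned by z. For any group grading of H_n by an abelian group G, there is a basis B = {z, u_1, u_1', …, u_k, u_k'} of H_n consisting of homogeneous elements such that [u_i, u_i'] = z for all i and all other brackets among elements of B vanish. -/
/-- For a pair of indices of the Heisenberg basis, the predicate of being a
"symplectic pair" `(u_i, u_i')` or `(u_i', u_i)`. -/
def HeisPair {k : ℕ} (p q : (Fin k × Bool) ⊕ Unit) : Prop :=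
  ∃ i : Fin k, (p = Sum.inl (i, false) ∧ q = Sum.inl (i, true)) ∨
    (p = Sum.inl (i, true) ∧ q = Sum.inl (i, false))

/-- Theorem 3.1 (first part): for any group grading on the Heisenberg algebra
`H_n` (`n = 2k+1`), there is a basis `{z, u_1, u_1', …, u_k, u_k'}` of
homogeneous elements with `[u_i, u_i'] = z` and all other brackets among basis
elements zero. -/
theorem heisenberg_grading_homogeneous_basis
    (F : Type*) [Field F] (L : Type*) [LieRing L] [LieAlgebra F L] (k : ℕ)
    (b : Module.Basis ((Fin k × Bool) ⊕ Unit) F L)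
    (hbr : ∀ i : Fin k, ⁅b (Sum.inl (i, false)), b (Sum.inl (i, true))⁆ = b (Sum.inr ()))
    (hz : ∀ p q : (Fin k × Bool) ⊕ Unit, ¬ HeisPair p q → ⁅b p, b q⁆ = 0)
    (G : Type*) [AddCommGroup G] [DecidableEq G]
    (Lg : G → Submodule F L) (hint : DirectSum.IsInternal Lg)
    (hgr : ∀ (g h : G) (x y : L), x ∈ Lg g → y ∈ Lg h → ⁅x, y⁆ ∈ Lg (g + h)) :
    ∃ c : Module.Basis ((Fin k × Bool) ⊕ Unit) F L,
      c (Sum.inr ()) = b (Sum.inr ()) ∧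
      (∀ p : (Fin k × Bool) ⊕ Unit, ∃ g : G, c p ∈ Lg g) ∧
      (∀ i : Fin k, ⁅c (Sum.inl (i, false)), c (Sum.inl (i, true))⁆ = b (Sum.inr ())) ∧
      (∀ p q : (Fin k × Bool) ⊕ Unit, ¬ HeisPair p q → ⁅c p, c q⁆ = 0) := by
  classical
  set z := b (Sum.inr ()) with hzdef
  have hzne : z ≠ 0 := b.ne_zero _
  haveI : FiniteDimensional F L := b.finiteDimensional_of_finite
  -- the symplectic-like form
  obtain ⟨ω, hω⟩ : ∃ ω : L →ₗ[F] L →ₗ[F] F,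
      ∀ x y, ω x y = b.repr ⁅x, y⁆ (Sum.inr ()) := by
    refine ⟨LinearMap.mk₂ F (fun x y => b.repr ⁅x, y⁆ (Sum.inr ())) ?_ ?_ ?_ ?_,
      fun _ _ => rfl⟩ <;> intros <;>
      simp [add_lie, lie_add, smul_lie, lie_smul, map_add, map_smul, smul_eq_mul]
  have hωskew : ∀ x y : L, ω x y = - ω y x := by
    intro x y
    rw [hω, hω, ← lie_skew x y, map_neg, Finsupp.neg_apply]
  have hωself : ∀ x : L, ω x x = 0 := by
    intro x; rw [hω]; simp
  -- z is central
  have hadz : LieAlgebra.ad F L z = 0 := by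
    refine b.ext fun q => ?_
    rw [LieAlgebra.ad_apply, LinearMap.zero_apply, hzdef]
    exact hz _ q (by rintro ⟨i, ⟨h1, -⟩ | ⟨h1, -⟩⟩ <;> simp at h1)
  have hzlie : ∀ x : L, ⁅z, x⁆ = 0 := by
    intro x
    have := LinearMap.congr_fun hadz x
    rwa [LieAlgebra.ad_apply, LinearMap.zero_apply] at this
  have hliez : ∀ x : L, ⁅x, z⁆ = 0 := by
    intro x
    rw [← neg_eq_zero, lie_skew]
    exact hzlie x
  have hωzr : ∀ x : L, ω x z = 0 := by
    intro x; rw [hω, hliez x]; simp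
  have hωzl : ∀ x : L, ω z x = 0 := by
    intro x; rw [hω, hzlie x]; simp
  -- the bracket formula
  have hbrω : ∀ x y : L, ⁅x, y⁆ = ω x y • z := by
    obtain ⟨B, hB⟩ : ∃ B : L →ₗ[F] L →ₗ[F] L, ∀ x y, B x y = ⁅x, y⁆ :=
      ⟨LinearMap.mk₂ F (fun x y => ⁅x, y⁆) add_lie smul_lie lie_add lie_smul, fun _ _ => rfl⟩
    obtain ⟨B', hB'⟩ : ∃ B' : L →ₗ[F] L →ₗ[F] L, ∀ x y, B' x y = ω x y • z :=
      ⟨ω.compr₂ (LinearMap.toSpanSingleton F L z), fun x y => by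
        rw [LinearMap.compr₂_apply, LinearMap.toSpanSingleton_apply]⟩
    have hBB : B = B' := by
      refine b.ext fun p => b.ext fun q => ?_
      rw [hB, hB']
      by_cases hpq : HeisPair p q
      · obtain ⟨i, ⟨rfl, rfl⟩ | ⟨rfl, rfl⟩⟩ := hpq
        · rw [hω, hbr i, hzdef, Module.Basis.repr_self]
          simp
        · have hlie : ⁅b (Sum.inl (i, true)), b (Sum.inl (i, false))⁆ = -z := by
            rw [← hbr i]
            exact (lie_skew _ _).symm
          rw [hω, hlie, map_neg, Finsupp.neg_apply, hzdef, Module.Basis.repr_self]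
          simp
      · rw [hω, hz p q hpq]
        simp
    intro x y
    have h1 := LinearMap.congr_fun (LinearMap.congr_fun hBB x) y
    rw [hB, hB'] at h1
    exact h1
  -- decomposition into homogeneous pieces
  have hdec : ∀ x : L, ∃ f : G →₀ L, (∀ g, f g ∈ Lg g) ∧ (f.sum fun _ v => v) = x := by
    intro x
    have hx : x ∈ iSup Lg := by rw [hint.submodule_iSup_eq_top]; trivial
    exact (Submodule.mem_iSup_iff_exists_finsupp Lg x).mp hx
  -- z is homogeneous
  obtain ⟨g0, hg0⟩ : ∃ g0, z ∈ Lg g0 := by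
    rcases Nat.eq_zero_or_pos k with hk | hk
    · subst hk
      have htop : (⊤ : Submodule F L) = Submodule.span F {z} := by
        refine (Submodule.eq_of_le_of_finrank_le le_top ?_).symm
        rw [finrank_top, Module.finrank_eq_card_basis b, finrank_span_singleton hzne]
        simp
      obtain ⟨f, hf1, hf2⟩ := hdec z
      have hex : ∃ g, f g ≠ 0 := by
        by_contra h; push_neg at h
        have hf0 : f = 0 := Finsupp.ext h
        rw [hf0, Finsupp.sum_zero_index] at hf2
        exact hzne hf2.symm
      obtain ⟨g, hg⟩ := hex
      have hfg : f g ∈ Submodule.span F {z} := htop ▸ Submodule.mem_top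
      obtain ⟨a, ha⟩ := Submodule.mem_span_singleton.mp hfg
      have hane : a ≠ 0 := by rintro rfl; rw [zero_smul] at ha; exact hg ha.symm
      have hza : z = a⁻¹ • f g := by
        rw [← ha, smul_smul, inv_mul_cancel₀ hane, one_smul]
      exact ⟨g, hza ▸ Submodule.smul_mem _ _ (hf1 g)⟩
    · have i0 : Fin k := ⟨0, hk⟩
      have h1 : ω (b (Sum.inl (i0, false))) (b (Sum.inl (i0, true))) = 1 := by
        rw [hω, hbr i0, hzdef, Module.Basis.repr_self]
        simp
      obtain ⟨fe, hfe, hfes⟩ := hdec (b (Sum.inl (i0, false)))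
      obtain ⟨ff, hff, hffs⟩ := hdec (b (Sum.inl (i0, true)))
      have hsum : (fe.sum fun _ xg => ff.sum fun _ yh => ω xg yh) = 1 := by
        rw [← h1, ← hfes, ← hffs]
        have e1 : ∀ y : L, ω (fe.sum fun _ v => v) y = fe.sum fun _ v => ω v y := by
          intro y
          simpa [LinearMap.flip_apply] using map_finsuppSum (ω.flip y) fe (fun _ v => v)
        rw [e1]
        exact Finsupp.sum_congr fun g _ => (map_finsuppSum (ω (fe g)) ff (fun _ v => v)).symm
      have hex : ∃ g h, ω (fe g) (ff h) ≠ 0 := by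
        by_contra hcc; push_neg at hcc
        have h0 : (fe.sum fun _ xg => ff.sum fun _ yh => ω xg yh) = 0 :=
          Finset.sum_eq_zero fun g _ => Finset.sum_eq_zero fun h _ => hcc g h
        rw [h0] at hsum
        exact one_ne_zero hsum.symm
      obtain ⟨g, h, hgh⟩ := hex
      refine ⟨g + h, ?_⟩
      have hb2 : ⁅fe g, ff h⁆ ∈ Lg (g + h) := hgr _ _ _ _ (hfe g) (hff h)
      rw [hbrω] at hb2
      have h3 := Submodule.smul_mem (Lg (g + h)) (ω (fe g) (ff h))⁻¹ hb2
      rwa [smul_smul, inv_mul_cancel₀ hgh, one_smul] at h3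
  -- key lemma : nonzero pairing forces degrees to sum to g0
  have hkey : ∀ (g h : G) (x y : L), x ∈ Lg g → y ∈ Lg h → ω x y ≠ 0 → g + h = g0 := by
    intro g h x y hx hy hne
    by_contra hne2
    have hb2 : ⁅x, y⁆ ∈ Lg (g + h) := hgr _ _ _ _ hx hy
    rw [hbrω] at hb2
    have hzin : z ∈ Lg (g + h) := by
      have h3 := Submodule.smul_mem (Lg (g + h)) (ω x y)⁻¹ hb2
      rwa [smul_smul, inv_mul_cancel₀ hne, one_smul] at h3
    have hd := (hint.submodule_iSupIndep.pairwiseDisjoint) hne2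
    exact hzne (Submodule.disjoint_def.mp hd z hzin hg0)
  -- the center is spanned by z
  have hcoordf : ∀ i : Fin k, ω.flip (b (Sum.inl (i, true))) = b.coord (Sum.inl (i, false)) := by
    intro i
    refine b.ext fun p => ?_
    rw [LinearMap.flip_apply, hω, Module.Basis.coord_apply, Module.Basis.repr_self]
    by_cases hp : p = Sum.inl (i, false)
    · subst hp
      rw [hbr i, hzdef, Module.Basis.repr_self]
      simp
    · rw [hz p _ ?_]
      · simp [Finsupp.single_apply, hp]
      · rintro ⟨i', ⟨h1, h2⟩ | ⟨h1, h2⟩⟩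
        · simp only [Sum.inl.injEq, Prod.mk.injEq] at h2
          exact hp (by rw [h1, h2.1])
        · simp at h2
  have hcoordt : ∀ i : Fin k, ω.flip (b (Sum.inl (i, false))) = -(b.coord (Sum.inl (i, true))) := by
    intro i
    refine b.ext fun p => ?_
    rw [LinearMap.flip_apply, hω, LinearMap.neg_apply, Module.Basis.coord_apply, Module.Basis.repr_self]
    by_cases hp : p = Sum.inl (i, true)
    · subst hp
      have hlie : ⁅b (Sum.inl (i, true)), b (Sum.inl (i, false))⁆ = -z := by
        rw [← hbr i]
        exact (lie_skew _ _).symm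
      rw [hlie, map_neg, Finsupp.neg_apply, hzdef, Module.Basis.repr_self]
      simp
    · rw [hz p _ ?_]
      · simp [Finsupp.single_apply, hp]
      · rintro ⟨i', ⟨h1, h2⟩ | ⟨h1, h2⟩⟩
        · simp at h2
        · simp only [Sum.inl.injEq, Prod.mk.injEq] at h2
          exact hp (by rw [h1, h2.1])
  have hcenter : ∀ x : L, (∀ y : L, ω x y = 0) → x ∈ Submodule.span F {z} := by
    intro x hx
    have hcf : ∀ i : Fin k, b.repr x (Sum.inl (i, false)) = 0 := by
      intro i
      have h1 := LinearMap.congr_fun (hcoordf i) x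
      rw [LinearMap.flip_apply, Module.Basis.coord_apply] at h1
      rw [← h1]; exact hx _
    have hct : ∀ i : Fin k, b.repr x (Sum.inl (i, true)) = 0 := by
      intro i
      have h1 := LinearMap.congr_fun (hcoordt i) x
      rw [LinearMap.flip_apply, LinearMap.neg_apply, Module.Basis.coord_apply] at h1
      have h2 := hx (b (Sum.inl (i, false)))
      rw [h1, neg_eq_zero] at h2
      exact h2
    have hxe : x = b.repr x (Sum.inr ()) • z := by
      have h3 : b.repr (x - b.repr x (Sum.inr ()) • z) = 0 := by
        rw [map_sub, map_smul, hzdef, Module.Basis.repr_self]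
        ext p
        rcases p with ⟨i, s⟩ | u
        · cases s
          · simp [Finsupp.single_apply, hcf i]
          · simp [Finsupp.single_apply, hct i]
        · simp
      have h4 := b.repr.map_eq_zero_iff.mp h3
      exact (sub_eq_zero.mp h4)
    rw [hxe]
    exact Submodule.smul_mem _ _ (Submodule.mem_span_singleton_self z)
  -- main induction: homogeneous symplectic basis extraction
  have main : ∀ (m : ℕ) (S : Submodule F L),
      (∀ x ∈ S, ∃ f : G →₀ L, (∀ g, f g ∈ Lg g) ∧ (∀ g, f g ∈ S) ∧ (f.sum fun _ v => v) = x) →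
      (∀ x ∈ S, (∀ y ∈ S, ω x y = 0) → x ∈ Submodule.span F {z}) →
      z ∈ S → Module.finrank F S = 2 * m + 1 →
      ∃ u : Fin m × Bool → L,
        (∀ p, u p ∈ S) ∧ (∀ p, ∃ g, u p ∈ Lg g) ∧
        (∀ i : Fin m, ω (u (i, false)) (u (i, true)) = 1) ∧
        (∀ p q : Fin m × Bool, ¬(p.1 = q.1 ∧ p.2 ≠ q.2) → ω (u p) (u q) = 0) ∧
        S ≤ Submodule.span F (insert z (Set.range u)) := by
    intro m
    induction m with
    | zero =>
      intro S hdecS hradS hzS hrk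
      refine ⟨fun p => p.1.elim0, fun p => p.1.elim0, fun p => p.1.elim0,
        fun i => i.elim0, fun p => p.1.elim0, ?_⟩
      have h1 : Submodule.span F {z} = S := by
        refine Submodule.eq_of_le_of_finrank_le ?_ ?_
        · rw [Submodule.span_le, Set.singleton_subset_iff]; exact hzS
        · rw [hrk, finrank_span_singleton hzne]
      intro x hx
      have hx' : x ∈ Submodule.span F {z} := h1 ▸ hx
      exact Submodule.span_mono (Set.singleton_subset_iff.mpr (Set.mem_insert _ _)) hx'
    | succ m ih =>
      intro S hdecS hradS hzS hrk
      -- a homogeneous element of S outside the span of z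
      have hstep1 : ∃ u, u ∈ S ∧ (∃ g, u ∈ Lg g) ∧ u ∉ Submodule.span F {z} := by
        by_contra hcon
        push_neg at hcon
        have hSle : S ≤ Submodule.span F {z} := by
          intro x hx
          obtain ⟨f, hf1, hf2, hf3⟩ := hdecS x hx
          rw [← hf3]
          exact Submodule.sum_mem _ fun g _ => hcon (f g) (hf2 g) ⟨g, hf1 g⟩
        have hle := Submodule.finrank_mono hSle
        rw [hrk, finrank_span_singleton hzne] at hle
        omega
      obtain ⟨u, huS, ⟨gu, hugu⟩, huz⟩ := hstep1
      -- a homogeneous partner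
      have hstep2 : ∃ y ∈ S, ω u y ≠ 0 := by
        by_contra hcon; push_neg at hcon
        exact huz (hradS u huS hcon)
      obtain ⟨y, hyS, hyne⟩ := hstep2
      obtain ⟨f, hf1, hf2, hf3⟩ := hdecS y hyS
      have hstep3 : ∃ g, ω u (f g) ≠ 0 := by
        by_contra hcon; push_neg at hcon
        apply hyne
        rw [← hf3, map_finsuppSum]
        exact Finset.sum_eq_zero fun g _ => hcon g
      obtain ⟨g1, hg1⟩ := hstep3
      obtain ⟨v, hvdef⟩ : ∃ v : L, v = (ω u (f g1))⁻¹ • f g1 := ⟨_, rfl⟩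
      have hvS : v ∈ S := hvdef ▸ Submodule.smul_mem _ _ (hf2 g1)
      have hvLg : v ∈ Lg g1 := hvdef ▸ Submodule.smul_mem _ _ (hf1 g1)
      have huv : ω u v = 1 := by
        rw [hvdef, map_smul, smul_eq_mul, inv_mul_cancel₀ hg1]
      have hωuu : ω u u = 0 := hωself u
      have hωvv : ω v v = 0 := hωself v
      have hvu : ω v u = -1 := by rw [hωskew v u, huv]
      set S' := S ⊓ LinearMap.ker (ω u) ⊓ LinearMap.ker (ω v) with hS'def
      have hmemS' : ∀ x, x ∈ S' ↔ x ∈ S ∧ ω u x = 0 ∧ ω v x = 0 := by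
        intro x
        rw [hS'def]
        simp [Submodule.mem_inf, LinearMap.mem_ker, and_assoc]
      have hS'S : S' ≤ S := fun x hx => ((hmemS' x).mp hx).1
      have hzS' : z ∈ S' := (hmemS' z).mpr ⟨hzS, hωzr u, hωzr v⟩
      -- S' inherits the decomposition property
      have hdecS' : ∀ x ∈ S', ∃ f : G →₀ L,
          (∀ g, f g ∈ Lg g) ∧ (∀ g, f g ∈ S') ∧ (f.sum fun _ v => v) = x := by
        intro x hx
        obtain ⟨hxS, hxu, hxv⟩ := (hmemS' x).mp hx
        obtain ⟨fx, hfx1, hfx2, hfx3⟩ := hdecS x hxS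
        refine ⟨fx, hfx1, ?_, hfx3⟩
        have key : ∀ (w : L) (gw : G), w ∈ Lg gw → ω w x = 0 → ∀ g, ω w (fx g) = 0 := by
          intro w gw hw hwx g
          by_cases hg : gw + g = g0
          · have hsum : ω w x = ω w (fx g) := by
              rw [← hfx3, map_finsuppSum]
              refine Finset.sum_eq_single g ?_ ?_
              · intro g' _ hne
                by_contra hne2
                have hkk := hkey gw g' w (fx g') hw (hfx1 g') hne2
                exact hne (add_left_cancel (hkk.trans hg.symm))
              · intro hns
                simp [Finsupp.notMem_support_iff.mp hns]
            rw [← hsum, hwx]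
          · by_contra hne2
            exact hg (hkey gw g w (fx g) hw (hfx1 g) hne2)
        intro g
        exact (hmemS' _).mpr ⟨hfx2 g, key u gu hugu hxu g, key v g1 hvLg hxv g⟩
      -- projection onto S'
      have hproj : ∀ w ∈ S, w - (ω w v) • u - (ω u w) • v ∈ S' := by
        intro w hwS
        refine (hmemS' _).mpr ⟨?_, ?_, ?_⟩
        · exact Submodule.sub_mem _
            (Submodule.sub_mem _ hwS (Submodule.smul_mem _ _ huS)) (Submodule.smul_mem _ _ hvS)
        · rw [map_sub, map_sub, map_smul, map_smul, hωuu, huv]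
          simp only [smul_eq_mul]
          ring
        · rw [map_sub, map_sub, map_smul, map_smul, hvu, hωvv, hωskew w v]
          simp only [smul_eq_mul]
          ring
      -- S' inherits the radical property
      have hradS' : ∀ x ∈ S', (∀ y ∈ S', ω x y = 0) → x ∈ Submodule.span F {z} := by
        intro x hx hxall
        obtain ⟨hxS, hxu, hxv⟩ := (hmemS' x).mp hx
        refine hradS x hxS ?_
        intro w hwS
        have h0 := hxall _ (hproj w hwS)
        have hxu' : ω x u = 0 := by rw [hωskew x u, hxu, neg_zero]
        have hxv' : ω x v = 0 := by rw [hωskew x v, hxv, neg_zero]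
        rw [map_sub, map_sub, map_smul, map_smul, hxu', hxv'] at h0
        simpa using h0
      -- rank bookkeeping
      have hliuv : LinearIndependent F ![u, v] := by
        rw [LinearIndependent.pair_iff]
        intro s t hst
        have h1 : ω u (s • u + t • v) = 0 := by rw [hst, map_zero]
        have h2 : ω v (s • u + t • v) = 0 := by rw [hst, map_zero]
        simp [map_add, map_smul, hωuu, huv, hvu, hωvv, smul_eq_mul] at h1 h2
        exact ⟨h2, h1⟩
      have hrange : Set.range ![u, v] = ({u, v} : Set L) := by
        simp only [Matrix.range_cons, Matrix.range_empty, Set.union_empty,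
          Set.singleton_union, Set.union_singleton]
        first
        | rfl
        | exact Set.pair_comm v u
      have hfinP : Module.finrank F (Submodule.span F ({u, v} : Set L)) = 2 := by
        rw [← hrange, finrank_span_eq_card hliuv, Fintype.card_fin]
      have hPdisj : Submodule.span F ({u, v} : Set L) ⊓ S' = ⊥ := by
        rw [Submodule.eq_bot_iff]
        intro x hx
        obtain ⟨hxP, hxS'⟩ := Submodule.mem_inf.mp hx
        obtain ⟨s, t, hst⟩ := Submodule.mem_span_pair.mp hxP
        obtain ⟨-, hxu, hxv⟩ := (hmemS' x).mp hxS'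
        rw [← hst] at hxu hxv
        simp [map_add, map_smul, hωuu, huv, hvu, hωvv, smul_eq_mul] at hxu hxv
        rw [← hst, hxu, hxv]
        simp
      have hPsup : Submodule.span F ({u, v} : Set L) ⊔ S' = S := by
        apply le_antisymm
        · refine sup_le ?_ hS'S
          rw [Submodule.span_le]
          intro w hw
          simp only [Set.mem_insert_iff, Set.mem_singleton_iff] at hw
          rcases hw with rfl | rfl
          · exact huS
          · exact hvS
        · intro w hwS
          have hsplit : w = ((ω w v) • u + (ω u w) • v) + (w - (ω w v) • u - (ω u w) • v) := by
            abel
          rw [hsplit]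
          refine Submodule.add_mem _ (Submodule.mem_sup_left ?_)
            (Submodule.mem_sup_right (hproj w hwS))
          exact Submodule.add_mem _
            (Submodule.smul_mem _ _ (Submodule.subset_span (by simp)))
            (Submodule.smul_mem _ _ (Submodule.subset_span (by simp)))
      have hrkS' : Module.finrank F S' = 2 * m + 1 := by
        have h := Submodule.finrank_sup_add_finrank_inf_eq
          (Submodule.span F ({u, v} : Set L)) S'
        rw [hPsup, hPdisj, hrk, hfinP, finrank_bot] at h
        omega
      obtain ⟨u', hu'S, hu'hom, hu'pair, hu'orth, hu'span⟩ := ih S' hdecS' hradS' hzS' hrkS'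
      -- assemble
      set U : Fin (m + 1) × Bool → L :=
        fun p => Fin.cases (if p.2 then v else u) (fun j => u' (j, p.2)) p.1 with hUdef
      have hU0 : ∀ s : Bool, U (0, s) = if s then v else u := by
        intro s; simp [hUdef]
      have hUs : ∀ (j : Fin m) (s : Bool), U (j.succ, s) = u' (j, s) := by
        intro j s; simp [hUdef]
      refine ⟨U, ?_, ?_, ?_, ?_, ?_⟩
      · rintro ⟨i, s⟩
        rcases Fin.eq_zero_or_eq_succ i with rfl | ⟨j, rfl⟩
        · rw [hU0]; cases s
          · simpa using huS
          · simpa using hvS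
        · rw [hUs]; exact hS'S (hu'S _)
      · rintro ⟨i, s⟩
        rcases Fin.eq_zero_or_eq_succ i with rfl | ⟨j, rfl⟩
        · rw [hU0]; cases s
          · exact ⟨gu, by simpa using hugu⟩
          · exact ⟨g1, by simpa using hvLg⟩
        · rw [hUs]; exact hu'hom _
      · intro i
        rcases Fin.eq_zero_or_eq_succ i with rfl | ⟨j, rfl⟩
        · rw [hU0, hU0]; simpa using huv
        · rw [hUs, hUs]; exact hu'pair j
      · rintro ⟨i, s⟩ ⟨i', t⟩ hnp
        rcases Fin.eq_zero_or_eq_succ i with rfl | ⟨j, rfl⟩ <;>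
          rcases Fin.eq_zero_or_eq_succ i' with rfl | ⟨j', rfl⟩
        · have hst : s = t := by
            by_contra h; exact hnp ⟨rfl, h⟩
          subst hst
          rw [hU0]
          cases s
          · simpa using hωuu
          · simpa using hωvv
        · rw [hU0, hUs]
          obtain ⟨-, h1, h2⟩ := (hmemS' _).mp (hu'S (j', t))
          cases s
          · simpa using h1
          · simpa using h2
        · rw [hUs, hU0]
          obtain ⟨-, h1, h2⟩ := (hmemS' _).mp (hu'S (j, s))
          cases t
          · rw [hωskew]; simpa using h1
          · rw [hωskew]; simpa using h2
        · rw [hUs, hUs]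
          refine hu'orth (j, s) (j', t) ?_
          rintro ⟨h1, h2⟩
          exact hnp ⟨congrArg Fin.succ h1, h2⟩
      · intro x hx
        rw [← hPsup] at hx
        obtain ⟨xp, hxp, xs, hxs, rfl⟩ := Submodule.mem_sup.mp hx
        refine Submodule.add_mem _ ?_ ?_
        · refine Submodule.span_le.mpr ?_ hxp
          intro w hw
          simp only [Set.mem_insert_iff, Set.mem_singleton_iff] at hw
          rcases hw with rfl | rfl
          · exact Submodule.subset_span (Set.mem_insert_of_mem _ ⟨(0, false), by simp [hU0]⟩)
          · exact Submodule.subset_span (Set.mem_insert_of_mem _ ⟨(0, true), by simp [hU0]⟩)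
        · refine Submodule.span_le.mpr ?_ (hu'span hxs)
          intro w hw
          rcases Set.mem_insert_iff.mp hw with rfl | ⟨p, rfl⟩
          · exact Submodule.subset_span (Set.mem_insert _ _)
          · exact Submodule.subset_span
              (Set.mem_insert_of_mem _ ⟨(p.1.succ, p.2), by rw [hUs]⟩)
  -- apply to the whole algebra
  have hpairiff : ∀ a a' : Fin k × Bool,
      (a.1 = a'.1 ∧ a.2 ≠ a'.2) → HeisPair (Sum.inl a) (Sum.inl a') := by
    rintro ⟨i, s⟩ ⟨j, t⟩ ⟨h1, h2⟩
    obtain rfl : i = j := h1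
    refine ⟨i, ?_⟩
    cases s <;> cases t
    · exact absurd rfl h2
    · exact Or.inl ⟨rfl, rfl⟩
    · exact Or.inr ⟨rfl, rfl⟩
    · exact absurd rfl h2
  obtain ⟨u, huT, huhom, hupair, huorth, huspan⟩ :=
    main k ⊤
      (fun x _ => by
        obtain ⟨f, h1, h2⟩ := hdec x
        exact ⟨f, h1, fun g => Submodule.mem_top, h2⟩)
      (fun x _ hx => hcenter x (fun y => hx y Submodule.mem_top)) Submodule.mem_top
      (by
        rw [finrank_top, Module.finrank_eq_card_basis b, Fintype.card_sum,
          Fintype.card_prod, Fintype.card_fin, Fintype.card_bool, Fintype.card_unit]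
        ring)
  have hcard : Fintype.card ((Fin k × Bool) ⊕ Unit) = Module.finrank F L := by
    rw [Module.finrank_eq_card_basis b]
  have hspan : ⊤ ≤ Submodule.span F (Set.range (Sum.elim u (fun _ : Unit => z))) := by
    refine le_trans huspan (Submodule.span_mono ?_)
    intro w hw
    rcases Set.mem_insert_iff.mp hw with rfl | ⟨p, rfl⟩
    · exact ⟨Sum.inr (), rfl⟩
    · exact ⟨Sum.inl p, rfl⟩
  refine ⟨basisOfTopLeSpanOfCardEqFinrank (Sum.elim u fun _ : Unit => z) hspan hcard,
    ?_, ?_, ?_, ?_⟩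
  · rw [coe_basisOfTopLeSpanOfCardEqFinrank]
    rfl
  · intro p
    rw [coe_basisOfTopLeSpanOfCardEqFinrank]
    rcases p with a | u'
    · exact huhom a
    · exact ⟨g0, hg0⟩
  · intro i
    rw [coe_basisOfTopLeSpanOfCardEqFinrank]
    show ⁅u (i, false), u (i, true)⁆ = z
    rw [hbrω, hupair i, one_smul]
  · intro p q hnp
    rw [coe_basisOfTopLeSpanOfCardEqFinrank]
    rcases p with a | u1
    · rcases q with a' | u2
      · have hno : ¬(a.1 = a'.1 ∧ a.2 ≠ a'.2) := fun hC => hnp (hpairiff a a' hC)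
        show ⁅u a, u a'⁆ = 0
        rw [hbrω, huorth a a' hno, zero_smul]
      · exact hliez _
    · exact hzlie _
end

section
/- Let H_n be the Heisenberg algebra of dimension n = 2k+1 with basis {e_1,ê_1,…,e_k,ê_k,z} and nonzero brackets [e_i,ê_i] = z. The set T of automorphisms of H_n that are diagonal with respect to this basis, namely f(z) = λz, f(e_i) = λ_i e_i, f(ê_i) = (λ/λ_i) ê_i for nonzero scalars λ, λ_1, …, λ_k, forms a maximal torus of Aut(H_n): T is an abelian subgroup isomorphic to (F^×)^{k+1}, and any automorphism of H_n commuting with all elements of T belongs to T. -/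
/-- The automorphisms of `H_n` diagonal with respect to the standard basis:
`f z = λ • z`, `f e_i = λ_i • e_i`, `f ê_i = (λ/λ_i) • ê_i`. -/
def IsDiagHeisAut {F : Type*} [Field F] {L : Type*} [LieRing L] [LieAlgebra F L]
    {k : ℕ} (b : Module.Basis ((Fin k × Bool) ⊕ Unit) F L) (f : L ≃ₗ[F] L) : Prop :=
  ∃ (lam : F) (lamv : Fin k → F), lam ≠ 0 ∧ (∀ i, lamv i ≠ 0) ∧
    f (b (Sum.inr ())) = lam • b (Sum.inr ()) ∧
    (∀ i : Fin k, f (b (Sum.inl (i, false))) = lamv i • b (Sum.inl (i, false))) ∧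
    (∀ i : Fin k, f (b (Sum.inl (i, true))) = (lam / lamv i) • b (Sum.inl (i, true)))

section Helpers

variable {F : Type*} [Field F] {L : Type*} [LieRing L] [LieAlgebra F L] {k : ℕ}
  (b : Module.Basis ((Fin k × Bool) ⊕ Unit) F L)

/-- The diagonal linear automorphism with eigenvalue `c p` on the basis vector `b p`. -/
noncomputable def diagMap (c : (Fin k × Bool) ⊕ Unit → Fˣ) : L ≃ₗ[F] L :=
  LinearEquiv.ofLinear (b.constr F fun p => (c p : F) • b p)
    (b.constr F fun p => (((c p)⁻¹ : Fˣ) : F) • b p)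
    (by
      apply b.ext
      intro p
      simp [Module.Basis.constr_basis, smul_smul])
    (by
      apply b.ext
      intro p
      simp [Module.Basis.constr_basis, smul_smul])

@[simp] lemma diagMap_apply (c : (Fin k × Bool) ⊕ Unit → Fˣ) (p) :
    diagMap b c (b p) = (c p : F) • b p := by
  simp [diagMap, Module.Basis.constr_basis]

lemma diagMap_mul (c c' : (Fin k × Bool) ⊕ Unit → Fˣ) :
    diagMap b (c * c') = diagMap b c * diagMap b c' := by
  apply LinearEquiv.toLinearMap_injective
  apply b.ext
  intro p
  simp [smul_smul, mul_comm]

lemma repr_diagMap (c : (Fin k × Bool) ⊕ Unit → Fˣ) (q) (x : L) :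
    b.repr (diagMap b c x) q = (c q : F) * b.repr x q := by
  have h : (Finsupp.lapply q ∘ₗ (b.repr.toLinearMap ∘ₗ (diagMap b c).toLinearMap)) =
      (c q : F) • (Finsupp.lapply q ∘ₗ b.repr.toLinearMap) := by
    apply b.ext
    intro r
    rcases eq_or_ne r q with rfl | h
    · simp [Finsupp.single_apply]
    · simp [Finsupp.single_apply, h]
  simpa using LinearMap.congr_fun h x

/-- The eigenvalue pattern of a diagonal Heisenberg automorphism. -/
def scalFun (lamv : Fin k → Fˣ) (lam : Fˣ) : (Fin k × Bool) ⊕ Unit → Fˣ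
  | Sum.inl (i, false) => lamv i
  | Sum.inl (i, true) => lam * (lamv i)⁻¹
  | Sum.inr _ => lam

@[simp] lemma scalFun_ff (lamv : Fin k → Fˣ) (lam : Fˣ) (i : Fin k) :
    scalFun lamv lam (Sum.inl (i, false)) = lamv i := rfl
@[simp] lemma scalFun_tt (lamv : Fin k → Fˣ) (lam : Fˣ) (i : Fin k) :
    scalFun lamv lam (Sum.inl (i, true)) = lam * (lamv i)⁻¹ := rfl
@[simp] lemma scalFun_z (lamv : Fin k → Fˣ) (lam : Fˣ) (u : Unit) :
    scalFun lamv lam (Sum.inr u) = lam := rfl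

lemma scalFun_mul (lamv lamv' : Fin k → Fˣ) (lam lam' : Fˣ) :
    scalFun (lamv * lamv') (lam * lam') = scalFun lamv lam * scalFun lamv' lam' := by
  funext p
  rcases p with ⟨i, _ | _⟩ | u
  · simp [mul_comm]
  · simp [mul_inv, mul_comm, mul_left_comm, mul_assoc]
  · simp

lemma isDiag_diagMap (lamv : Fin k → Fˣ) (lam : Fˣ) :
    IsDiagHeisAut b (diagMap b (scalFun lamv lam)) := by
  refine ⟨lam, fun i => lamv i, lam.ne_zero, fun i => (lamv i).ne_zero, by simp, by simp,
    fun i => ?_⟩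
  simp [div_eq_mul_inv]

lemma eq_diagMap_of_isDiag (f : L ≃ₗ[F] L) (h : IsDiagHeisAut b f) :
    ∃ (lamv : Fin k → Fˣ) (lam : Fˣ), f = diagMap b (scalFun lamv lam) := by
  obtain ⟨lam, lamv, hlam, hlamv, hfz, hff, hft⟩ := h
  refine ⟨fun i => Units.mk0 (lamv i) (hlamv i), Units.mk0 lam hlam, ?_⟩
  apply LinearEquiv.toLinearMap_injective
  apply b.ext
  intro p
  rcases p with ⟨i, _ | _⟩ | u
  · simpa using hff i
  · simpa [div_eq_mul_inv] using hft i
  · simpa using hfz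

lemma lie_of_basis (f : L ≃ₗ[F] L) (h : ∀ p q, f ⁅b p, b q⁆ = ⁅f (b p), f (b q)⁆) :
    ∀ x y : L, f ⁅x, y⁆ = ⁅f x, f y⁆ := by
  have hB : (LinearMap.mk₂ F (fun x y : L => f ⁅x, y⁆)
      (by intros; simp [add_lie]) (by intros; simp [smul_lie])
      (by intros; simp [lie_add]) (by intros; simp [lie_smul])) =
    (LinearMap.mk₂ F (fun x y : L => ⁅f x, f y⁆)
      (by intros; simp [add_lie]) (by intros; simp [smul_lie])
      (by intros; simp [lie_add]) (by intros; simp [lie_smul])) := by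
    apply LinearMap.ext_basis b b
    intro p q
    simpa using h p q
  intro x y
  simpa using LinearMap.congr_fun₂ hB x y

lemma diagMap_lie
    (hbr : ∀ i : Fin k, ⁅b (Sum.inl (i, false)), b (Sum.inl (i, true))⁆ = b (Sum.inr ()))
    (hz : ∀ p q : (Fin k × Bool) ⊕ Unit, ¬ HeisPair p q → ⁅b p, b q⁆ = 0)
    (c : (Fin k × Bool) ⊕ Unit → Fˣ)
    (hc : ∀ i : Fin k, (c (Sum.inl (i, false)) : F) * c (Sum.inl (i, true)) = c (Sum.inr ())) :
    ∀ x y : L, diagMap b c ⁅x, y⁆ = ⁅diagMap b c x, diagMap b c y⁆ := by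
  apply lie_of_basis
  intro p q
  by_cases h : HeisPair p q
  · obtain ⟨i, ⟨rfl, rfl⟩ | ⟨rfl, rfl⟩⟩ := h
    · rw [hbr i]
      simp [smul_smul, hbr i]
      rw [mul_comm, hc i]
    · have hsk : ⁅b (Sum.inl (i, true)), b (Sum.inl (i, false))⁆ = -(b (Sum.inr ())) := by
        rw [← lie_skew, hbr i]
      rw [hsk]
      simp [smul_smul, hsk]
      rw [hc i]
  · rw [hz p q h]
    simp [smul_smul, hz p q h]

end Helpers

/-- The diagonal automorphisms of the Heisenberg algebra `H_n` form a maximal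
torus of `Aut(H_n)`: an abelian subgroup isomorphic to `(Fˣ)^{k+1}` such that
any automorphism commuting with all its elements belongs to it. -/
theorem heisenberg_diagonal_maximal_torus
    (F : Type*) [Field F] [Infinite F]
    (L : Type*) [LieRing L] [LieAlgebra F L] (k : ℕ)
    (b : Module.Basis ((Fin k × Bool) ⊕ Unit) F L)
    (hbr : ∀ i : Fin k, ⁅b (Sum.inl (i, false)), b (Sum.inl (i, true))⁆ = b (Sum.inr ()))
    (hz : ∀ p q : (Fin k × Bool) ⊕ Unit, ¬ HeisPair p q → ⁅b p, b q⁆ = 0) :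
    ∃ T : Subgroup (L ≃ₗ[F] L),
      (↑T = {f : L ≃ₗ[F] L |
        (∀ x y : L, f ⁅x, y⁆ = ⁅f x, f y⁆) ∧ IsDiagHeisAut b f}) ∧
      (∀ f ∈ T, ∀ g ∈ T, f * g = g * f) ∧
      Nonempty (T ≃* ((Fin k → Fˣ) × Fˣ)) ∧
      (∀ f : L ≃ₗ[F] L, (∀ x y : L, f ⁅x, y⁆ = ⁅f x, f y⁆) →
        (∀ g ∈ T, f * g = g * f) → f ∈ T) := by
  classical
  set S : Set (L ≃ₗ[F] L) := {f : L ≃ₗ[F] L |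
      (∀ x y : L, f ⁅x, y⁆ = ⁅f x, f y⁆) ∧ IsDiagHeisAut b f} with hSdef
  have hmemS : ∀ (lamv : Fin k → Fˣ) (lam : Fˣ), diagMap b (scalFun lamv lam) ∈ S := by
    intro lamv lam
    refine ⟨diagMap_lie b hbr hz _ fun i => ?_, isDiag_diagMap b lamv lam⟩
    simp [mul_comm, mul_left_comm, mul_assoc]
  have hSdiag : ∀ f ∈ S, ∃ (lamv : Fin k → Fˣ) (lam : Fˣ),
      f = diagMap b (scalFun lamv lam) := fun f hf => eq_diagMap_of_isDiag b f hf.2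
  have hone : diagMap b (scalFun (1 : Fin k → Fˣ) 1) = 1 := by
    apply LinearEquiv.toLinearMap_injective
    apply b.ext
    intro p
    rcases p with ⟨i, _ | _⟩ | u <;> simp
  have hinv : ∀ (lamv : Fin k → Fˣ) (lam : Fˣ),
      (diagMap b (scalFun lamv lam))⁻¹ = diagMap b (scalFun lamv⁻¹ lam⁻¹) := by
    intro lamv lam
    apply inv_eq_of_mul_eq_one_right
    rw [← diagMap_mul, ← scalFun_mul]
    simp [hone]
  have hcancel : ∀ (a a' : F) (p), a • b p = a' • b p → a = a' := by
      intro a a' p h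
      have h0 : (a - a') • b p = 0 := by rw [sub_smul, h, sub_self]
      rcases smul_eq_zero.mp h0 with h1 | h1
      · exact sub_eq_zero.mp h1
      · exact absurd h1 (b.ne_zero p)
  refine ⟨{ carrier := S
            one_mem' := by rw [← hone]; exact hmemS 1 1
            mul_mem' := by
              intro x y hx hy
              obtain ⟨μ, lam, rfl⟩ := hSdiag x hx
              obtain ⟨μ', lam', rfl⟩ := hSdiag y hy
              rw [← diagMap_mul, ← scalFun_mul]
              exact hmemS _ _
            inv_mem' := by
              intro x hx
              obtain ⟨μ, lam, rfl⟩ := hSdiag x hx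
              rw [hinv]
              exact hmemS _ _ }, rfl, ?_, ?_, ?_⟩
  · -- commutativity
    intro f hf g hg
    obtain ⟨μ, lam, rfl⟩ := hSdiag f hf
    obtain ⟨μ', lam', rfl⟩ := hSdiag g hg
    rw [← diagMap_mul, ← diagMap_mul, ← scalFun_mul, ← scalFun_mul, mul_comm μ μ',
      mul_comm lam lam']
  · -- isomorphism with (Fˣ)^{k+1}
    set T : Subgroup (L ≃ₗ[F] L) :=
      { carrier := S
        one_mem' := by rw [← hone]; exact hmemS 1 1
        mul_mem' := by
          intro x y hx hy
          obtain ⟨μ, lam, rfl⟩ := hSdiag x hx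
          obtain ⟨μ', lam', rfl⟩ := hSdiag y hy
          rw [← diagMap_mul, ← scalFun_mul]
          exact hmemS _ _
        inv_mem' := by
          intro x hx
          obtain ⟨μ, lam, rfl⟩ := hSdiag x hx
          rw [hinv]
          exact hmemS _ _ }
    set Ψ : ((Fin k → Fˣ) × Fˣ) → T :=
      (fun x => ⟨diagMap b (scalFun x.1 x.2), hmemS x.1 x.2⟩) with hΨ
    have hΨmul : ∀ x y, Ψ (x * y) = Ψ x * Ψ y := by
      intro x y
      apply Subtype.ext
      show diagMap b (scalFun (x.1 * y.1) (x.2 * y.2)) = _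
      rw [scalFun_mul, diagMap_mul]
      rfl
    have hbij : Function.Bijective Ψ := by
      constructor
      · intro x y hxy
        have h : diagMap b (scalFun x.1 x.2) = diagMap b (scalFun y.1 y.2) :=
          Subtype.ext_iff.mp hxy
        have hval : ∀ p, (scalFun x.1 x.2 p : F) = scalFun y.1 y.2 p := by
          intro p
          have h2 := congrArg (fun (g : L ≃ₗ[F] L) => g (b p)) h
          simp only [diagMap_apply] at h2
          exact hcancel _ _ p h2
        have h2 : x.2 = y.2 := Units.ext (hval (Sum.inr ()))
        have h1 : x.1 = y.1 := funext fun i => Units.ext (hval (Sum.inl (i, false)))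
        exact Prod.ext h1 h2
      · rintro ⟨f, hf⟩
        obtain ⟨μ, lam, rfl⟩ := hSdiag f hf
        exact ⟨(μ, lam), Subtype.ext rfl⟩
    exact ⟨(MulEquiv.ofBijective (MonoidHom.mk' Ψ hΨmul) hbij).symm⟩
  · -- maximality
    intro f hfLie hcomm
    obtain ⟨s, hs⟩ := Infinite.exists_notMem_finset ({0, 1, -1} : Finset F)
    simp only [Finset.mem_insert, Finset.mem_singleton, not_or] at hs
    obtain ⟨hs0, hs1, hsm1⟩ := hs
    set su : Fˣ := Units.mk0 s hs0 with hsu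
    have hssinv : s ≠ s⁻¹ := by
      intro h
      have h2 : s * s = 1 := by
        nth_rewrite 2 [h]
        exact mul_inv_cancel₀ hs0
      have h3 : (s - 1) * (s + 1) = 0 := by ring_nf; linear_combination h2
      rcases mul_eq_zero.mp h3 with h4 | h4
      · exact hs1 (sub_eq_zero.mp h4)
      · exact hsm1 (eq_neg_of_add_eq_zero_left h4)
    have hsinv1 : s⁻¹ ≠ 1 := by
      intro h
      exact hs1 (by rw [← inv_inv s, h, inv_one])
    set cfun : Fin k → ((Fin k × Bool) ⊕ Unit → Fˣ) :=
      fun i => scalFun (Function.update (1 : Fin k → Fˣ) i su) 1 with hcfun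
    have hv1 : ∀ (i j : Fin k) (e : Bool), j ≠ i → (cfun i (Sum.inl (j, e)) : F) = 1 := by
      intro i j e hj
      cases e <;> simp [hcfun, Function.update_apply, hj]
    have hv2 : ∀ i : Fin k, (cfun i (Sum.inl (i, false)) : F) = s := by
      intro i
      simp [hcfun, hsu]
    have hv3 : ∀ i : Fin k, (cfun i (Sum.inl (i, true)) : F) = s⁻¹ := by
      intro i
      simp [hcfun, hsu]
    have hv4 : ∀ (i : Fin k) (u : Unit), (cfun i (Sum.inr u) : F) = 1 := by
      intro i u
      simp [hcfun]
    have hes : ∀ (e : Bool), (if e then s⁻¹ else s) ≠ 1 := by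
      intro e
      cases e <;> simp [hs1, hsinv1]
    have hve : ∀ (i : Fin k) (e : Bool), (cfun i (Sum.inl (i, e)) : F) = if e then s⁻¹ else s := by
      intro i e
      cases e
      · simpa using hv2 i
      · simpa using hv3 i
    have hcomm' : ∀ (c : (Fin k × Bool) ⊕ Unit → Fˣ), diagMap b c ∈ S →
        ∀ x : L, diagMap b c (f x) = f (diagMap b c x) := by
      intro c hc x
      have h1 := hcomm (diagMap b c) hc
      exact (DFunLike.congr_fun h1 x).symm
    have key : ∀ p, b.repr (f (b p)) = Finsupp.single p (b.repr (f (b p)) p) := by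
      intro p
      ext q
      rcases eq_or_ne q p with rfl | hq
      · simp
      · rw [Finsupp.single_apply, if_neg (Ne.symm hq)]
        obtain ⟨c, hcS, hne⟩ : ∃ c, diagMap b c ∈ S ∧ (c q : F) ≠ (c p : F) := by
          rcases q with ⟨j, e⟩ | u
          · refine ⟨cfun j, hmemS _ _, ?_⟩
            rcases p with ⟨j', e'⟩ | u
            · by_cases hj : j' = j
              · subst hj
                have he : e ≠ e' := by
                  intro h
                  exact hq (by rw [h])
                rw [hve, hve]
                cases e <;> cases e' <;>
                  first
                    | exact absurd rfl he
                    | simpa using hssinv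
                    | simpa using Ne.symm hssinv
              · rw [hve, hv1 j j' e' hj]
                exact hes e
            · rw [hve, hv4]
              exact hes e
          · rcases p with ⟨j, e⟩ | u'
            · refine ⟨cfun j, hmemS _ _, ?_⟩
              rw [hv4, hve]
              exact (hes e).symm
            · exact absurd (by cases u; cases u'; rfl) hq
        have ha1 : (c q : F) * b.repr (f (b p)) q = (c p : F) * b.repr (f (b p)) q := by
          have e1 : diagMap b c (f (b p)) = f ((c p : F) • b p) := by
            rw [hcomm' c hcS (b p), diagMap_apply]
          have e2 := congrArg (fun v => b.repr v q) e1
          simpa [repr_diagMap] using e2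
        by_contra h0
        exact hne (mul_right_cancel₀ h0 ha1)
    have hfb : ∀ p, f (b p) = b.repr (f (b p)) p • b p := by
      intro p
      apply b.repr.injective
      rw [key p]
      simp
    have hane : ∀ p, b.repr (f (b p)) p ≠ 0 := by
      intro p h0
      have h1 : f (b p) = 0 := by rw [hfb p, h0, zero_smul]
      exact b.ne_zero p (f.map_eq_zero_iff.mp h1)
    have hrel : ∀ i : Fin k, b.repr (f (b (Sum.inr ()))) (Sum.inr ()) =
        b.repr (f (b (Sum.inl (i, false)))) (Sum.inl (i, false)) *
        b.repr (f (b (Sum.inl (i, true)))) (Sum.inl (i, true)) := by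
      intro i
      have h1 : f (b (Sum.inr ())) =
          (b.repr (f (b (Sum.inl (i, false)))) (Sum.inl (i, false)) *
           b.repr (f (b (Sum.inl (i, true)))) (Sum.inl (i, true))) • b (Sum.inr ()) := by
        conv_lhs => rw [← hbr i, hfLie, hfb (Sum.inl (i, false)), hfb (Sum.inl (i, true))]
        rw [smul_lie, lie_smul, hbr i, smul_smul]
      exact hcancel _ _ (Sum.inr ()) ((hfb (Sum.inr ())).symm.trans h1)
    refine ⟨hfLie, b.repr (f (b (Sum.inr ()))) (Sum.inr ()),
      fun i => b.repr (f (b (Sum.inl (i, false)))) (Sum.inl (i, false)),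
      hane _, fun i => hane _, hfb _, fun i => hfb _, fun i => ?_⟩
    rw [hfb (Sum.inl (i, true)), hrel i,
      mul_div_cancel_left₀ _ (hane (Sum.inl (i, false)))]
end

section
/- Let H_n be the Heisenberg algebra of dimension n = 2k+1 over a field F and P = H_n/Z(H_n) the associated symplectic space of dimension 2k. Then Aut(H_n) is isomorphic to the semidirect product GSp(P) ⋉ F^{2k}, where the product on GSp(P) × F^{2k} is (f̄, λ)(ḡ, η) = (f̄ḡ, λ·M(ḡ) + λ_f η), with M(ḡ) the matrix of ḡ in a fixed symplectic basis and λ_f the similitude factor of f̄. -/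
/-- `Aut(H_n) ≅ GSp(P) ⋉ F^{2k}`: the automorphism group of the Heisenberg
algebra is isomorphic to the semidirect product of the symplectic similitude
group of `P = H_n/Z(H_n)` with `F^{2k}`, with multiplication
`(f̄,λ)(ḡ,η) = (f̄ḡ, λ·M(ḡ) + λ_f η)`.  Similitudes are encoded together
with their (unique) similitude factor. -/
theorem heisenberg_automorphism_group_structure
    (F : Type*) [Field F]
    (L : Type*) [LieRing L] [LieAlgebra F L] (k : ℕ)
    (b : Module.Basis ((Fin k × Bool) ⊕ Unit) F L)
    (hbr : ∀ i : Fin k, ⁅b (Sum.inl (i, false)), b (Sum.inl (i, true))⁆ = b (Sum.inr ()))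
    (hz : ∀ p q : (Fin k × Bool) ⊕ Unit, ¬ HeisPair p q → ⁅b p, b q⁆ = 0)
    -- the induced symplectic form on `P = L ⧸ F•z`
    (B : LinearMap.BilinForm F (L ⧸ (F ∙ (b (Sum.inr ())))))
    (hB : ∀ x y : L, ⁅x, y⁆ =
      B (Submodule.Quotient.mk x) (Submodule.Quotient.mk y) • b (Sum.inr ()))
    -- the fixed symplectic basis of `P`, image of the `e_i, ê_i`
    (bp : Module.Basis (Fin k × Bool) F (L ⧸ (F ∙ (b (Sum.inr ())))))
    (hbp : ∀ p : Fin k × Bool, bp p = Submodule.Quotient.mk (b (Sum.inl p))) :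
    ∃ A : Subgroup (L ≃ₗ[F] L),
      (↑A = {f : L ≃ₗ[F] L | ∀ x y : L, f ⁅x, y⁆ = ⁅f x, f y⁆}) ∧
      ∃ e : A ≃
        ({p : ((L ⧸ (F ∙ (b (Sum.inr ())))) ≃ₗ[F] (L ⧸ (F ∙ (b (Sum.inr ()))))) × F //
            p.2 ≠ 0 ∧ ∀ x y, B (p.1 x) (p.1 y) = p.2 * B x y} ×
          ((Fin k × Bool) → F)),
        -- the similitude component is the induced map on the quotient
        (∀ (f : A) (x : L),
          (e f).1.1.1 (Submodule.Quotient.mk x)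
            = Submodule.Quotient.mk ((f : L ≃ₗ[F] L) x)) ∧
        -- the vector component measures the difference `f - f̄` on the `e_p`
        (∀ (f : A) (p : Fin k × Bool),
          (f : L ≃ₗ[F] L) (b (Sum.inl p)) - (e f).2 p • b (Sum.inr ())
            ∈ Submodule.span F (Set.range (fun p' : Fin k × Bool => b (Sum.inl p')))) ∧
        -- `e` carries the group law to the stated semidirect product law
        (∀ f g : A,
          (e (f * g)).1.1.1
            = (e f).1.1.1 * (e g).1.1.1 ∧
          (e (f * g)).1.1.2
            = (e f).1.1.2 * (e g).1.1.2 ∧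
          (e (f * g)).2
            = Matrix.vecMul (e f).2
                (LinearMap.toMatrix bp bp ((e g).1.1.1 : _ →ₗ[F] _))
              + (e f).1.1.2 • (e g).2) := by
  classical
  have hzne : b (Sum.inr ()) ≠ 0 := b.ne_zero _
  revert hbr hz B hB bp hbp
  set z : L := b (Sum.inr ()) with hzdef
  set Z : Submodule F L := F ∙ z with hZdef
  intro hbr hz B hB bp hbp
  set W : Submodule F L :=
    Submodule.span F (Set.range fun p' : Fin k × Bool => b (Sum.inl p')) with hWdef
  set c : L →ₗ[F] F := b.coord (Sum.inr ()) with hcdef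
  set s : (L ⧸ Z) →ₗ[F] L := Module.Basis.constr bp F (fun p => b (Sum.inl p)) with hsdef
  haveI : FiniteDimensional F L := Module.Finite.of_basis b
  have hc_inl : ∀ p : Fin k × Bool, c (b (Sum.inl p)) = 0 := by
    intro p
    simp [hcdef, Module.Basis.coord_apply, Module.Basis.repr_self, Finsupp.single_apply]
  have hc_z : c z = 1 := by
    simp [hcdef, hzdef, Module.Basis.coord_apply, Module.Basis.repr_self]
  have hs_b : ∀ p : Fin k × Bool, s (bp p) = b (Sum.inl p) := by
    intro p; simp [hsdef, Module.Basis.constr_basis]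
  have hmkz : (Submodule.Quotient.mk z : L ⧸ Z) = 0 := by
    rw [Submodule.Quotient.mk_eq_zero]
    exact Submodule.mem_span_singleton_self z
  have hmks : ∀ u : L ⧸ Z, (Submodule.Quotient.mk (s u) : L ⧸ Z) = u := by
    have h : Z.mkQ ∘ₗ s = LinearMap.id := by
      apply bp.ext; intro p
      simp [hs_b, Submodule.mkQ_apply, (hbp p).symm]
    intro u
    have := LinearMap.congr_fun h u
    simpa [Submodule.mkQ_apply] using this
  have hdecomp : ∀ v : L, s (Submodule.Quotient.mk v) + c v • z = v := by
    have h : (s ∘ₗ Z.mkQ) + (LinearMap.smulRight c z) = LinearMap.id := by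
      apply b.ext; intro i
      cases i with
      | inl p =>
        simp [hs_b, hc_inl, Submodule.mkQ_apply, (hbp p).symm]
      | inr u =>
        cases u
        simp [Submodule.mkQ_apply, ← hzdef, hmkz, hc_z]
    intro v
    have := LinearMap.congr_fun h v
    simpa [Submodule.mkQ_apply] using this
  have hWs : ∀ u : L ⧸ Z, s u ∈ W := by
    have h : LinearMap.range s ≤ W := by
      rw [LinearMap.range_eq_map, ← bp.span_eq, Submodule.map_span]
      refine Submodule.span_le.2 ?_
      intro x hx
      simp only [Set.mem_image, Set.mem_range] at hx
      obtain ⟨u, ⟨p, rfl⟩, rfl⟩ := hx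
      simpa [hs_b] using Submodule.subset_span (Set.mem_range_self p)
    exact fun u => h (LinearMap.mem_range_self s u)
  have hWmem : ∀ v : L, v - c v • z ∈ W := by
    intro v
    have h : v - c v • z = s (Submodule.Quotient.mk v) := by
      rw [eq_comm, eq_sub_iff_add_eq]
      exact hdecomp v
    rw [h]; exact hWs _
  have hcs : ∀ u : L ⧸ Z, c (s u) = 0 := by
    have h : c ∘ₗ s = 0 := by
      apply bp.ext; intro p; simp [hs_b, hc_inl]
    intro u; simpa using LinearMap.congr_fun h u
  set A : Subgroup (L ≃ₗ[F] L) :=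
    { carrier := {f : L ≃ₗ[F] L | ∀ x y : L, f ⁅x, y⁆ = ⁅f x, f y⁆}
      one_mem' := by intro x y; rfl
      mul_mem' := by
        intro f g hf hg x y
        have h1 : ∀ v : L, (f * g) v = f (g v) := fun _ => rfl
        rw [h1, h1, h1, hg, hf]
      inv_mem' := by
        intro f hf x y
        apply f.injective
        have h1 : ∀ v : L, f (f⁻¹ v) = v := fun v => f.apply_symm_apply v
        rw [hf, h1, h1, h1] } with hAdef
  have hmemA : ∀ f : L ≃ₗ[F] L, f ∈ A → ∀ x y : L, f ⁅x, y⁆ = ⁅f x, f y⁆ :=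
    fun f hf => hf
  -- every automorphism scales the centre
  have hfzZ : ∀ f : L ≃ₗ[F] L, f ∈ A → f z = c (f z) • z := by
    intro f hf
    rcases Nat.eq_zero_or_pos k with hk | hk
    · have hWbot : W = ⊥ := by
        haveI : IsEmpty (Fin k × Bool) := by
          subst hk; infer_instance
        rw [hWdef, Set.range_eq_empty, Submodule.span_empty]
      have h := hdecomp (f z)
      have h2 := hWs (Submodule.Quotient.mk (f z) : L ⧸ Z)
      rw [hWbot, Submodule.mem_bot] at h2
      rw [h2, zero_add] at h
      exact h.symm
    · set i : Fin k := ⟨0, hk⟩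
      have h1 : f z = B (Submodule.Quotient.mk (f (b (Sum.inl (i, false)))))
          (Submodule.Quotient.mk (f (b (Sum.inl (i, true))))) • z := by
        conv_lhs => rw [← hbr i]
        rw [hmemA f hf, hB]
      have h2 : c (f z) = B (Submodule.Quotient.mk (f (b (Sum.inl (i, false)))))
          (Submodule.Quotient.mk (f (b (Sum.inl (i, true))))) := by
        rw [h1, map_smul, hc_z, smul_eq_mul, mul_one]
      rw [h2, ← h1]
  have hlam_ne : ∀ f : L ≃ₗ[F] L, f ∈ A → c (f z) ≠ 0 := by
    intro f hf h0
    have h := hfzZ f hf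
    rw [h0, zero_smul] at h
    exact hzne (f.map_eq_zero_iff.mp h)
  have hmapZ : ∀ f : L ≃ₗ[F] L, f ∈ A → Z.map (f : L →ₗ[F] L) = Z := by
    intro f hf
    have h1 : Z.map (f : L →ₗ[F] L) = F ∙ (f z) := by
      rw [hZdef, Submodule.map_span, Set.image_singleton]
      rfl
    rw [h1, hfzZ f hf,
      Submodule.span_singleton_smul_eq (IsUnit.mk0 _ (hlam_ne f hf)) z]
  -- the induced map on the quotient
  set fbar : A → ((L ⧸ Z) ≃ₗ[F] (L ⧸ Z)) :=
    fun f => Submodule.Quotient.equiv Z Z (f : L ≃ₗ[F] L) (hmapZ _ f.2) with hfbardef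
  have hfbar_mk : ∀ (f : A) (x : L),
      fbar f (Submodule.Quotient.mk x) = Submodule.Quotient.mk ((f : L ≃ₗ[F] L) x) := by
    intro f x
    simp [hfbardef, Submodule.Quotient.equiv, Submodule.mapQ_apply]
  set lam : A → F := fun f => c ((f : L ≃ₗ[F] L) z) with hlamdef
  set mu : A → (Fin k × Bool) → F :=
    fun f p => c ((f : L ≃ₗ[F] L) (b (Sum.inl p))) with hmudef
  have hsim : ∀ f : A, ∀ x y : L ⧸ Z, B (fbar f x) (fbar f y) = lam f * B x y := by
    intro f x y
    obtain ⟨a, rfl⟩ := Submodule.Quotient.mk_surjective Z x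
    obtain ⟨a', rfl⟩ := Submodule.Quotient.mk_surjective Z y
    have h1 : ⁅(f : L ≃ₗ[F] L) a, (f : L ≃ₗ[F] L) a'⁆
        = B (fbar f (Submodule.Quotient.mk a)) (fbar f (Submodule.Quotient.mk a')) • z := by
      rw [hB, hfbar_mk, hfbar_mk]
    have h2 : ⁅(f : L ≃ₗ[F] L) a, (f : L ≃ₗ[F] L) a'⁆
        = (lam f * B (Submodule.Quotient.mk a) (Submodule.Quotient.mk a')) • z := by
      rw [← hmemA _ f.2 a a', hB a a', map_smul, hfzZ _ f.2, smul_smul, mul_comm]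
    exact smul_left_injective F hzne (h1.symm.trans h2)
  have hfx : ∀ (f : A) (x : L),
      (f : L ≃ₗ[F] L) x
        = s (fbar f (Submodule.Quotient.mk x)) + c ((f : L ≃ₗ[F] L) x) • z := by
    intro f x
    rw [hfbar_mk]
    exact (hdecomp _).symm
  have hkey : ∀ (f : A) (u : L ⧸ Z),
      c ((f : L ≃ₗ[F] L) (s u)) = ∑ q : Fin k × Bool, bp.repr u q * mu f q := by
    intro f
    have h : (c ∘ₗ (f : L →ₗ[F] L) ∘ₗ s)
        = ∑ q : Fin k × Bool, mu f q • bp.coord q := by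
      apply bp.ext; intro p
      simp only [LinearMap.comp_apply, LinearMap.sum_apply, LinearMap.smul_apply,
        Module.Basis.coord_apply, Module.Basis.repr_self, LinearEquiv.coe_coe, hs_b]
      rw [Finset.sum_eq_single p]
      · simp [hmudef]
      · intro q _ hq
        simp [Finsupp.single_apply, hq.symm]
      · intro hp; exact absurd (Finset.mem_univ p) hp
    intro u
    have := LinearMap.congr_fun h u
    simp only [LinearMap.comp_apply, LinearMap.sum_apply, LinearMap.smul_apply,
      Module.Basis.coord_apply, LinearEquiv.coe_coe, smul_eq_mul] at this
    rw [this]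
    exact Finset.sum_congr rfl fun q _ => mul_comm _ _
  -- the forward map
  set T := ({p : ((L ⧸ Z) ≃ₗ[F] (L ⧸ Z)) × F //
      p.2 ≠ 0 ∧ ∀ x y, B (p.1 x) (p.1 y) = p.2 * B x y} ×
      ((Fin k × Bool) → F)) with hTdef
  set Phi : A → T := fun f => ⟨⟨(fbar f, lam f), hlam_ne _ f.2, hsim f⟩, mu f⟩ with hPhidef
  have hPhi_inj : Function.Injective Phi := by
    intro f g hfg
    have h1 : fbar f = fbar g := congrArg (fun t : T => t.1.1.1) hfg
    have h2 : lam f = lam g := congrArg (fun t : T => t.1.1.2) hfg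
    have h3 : mu f = mu g := congrArg (fun t : T => t.2) hfg
    apply Subtype.ext
    apply LinearEquiv.toLinearMap_injective
    apply b.ext
    intro i
    cases i with
    | inl p =>
      have := hfx f (b (Sum.inl p))
      have h4 := hfx g (b (Sum.inl p))
      simp only [LinearEquiv.coe_coe, LinearMap.comp_apply]
      show (f : L ≃ₗ[F] L) (b (Sum.inl p)) = (g : L ≃ₗ[F] L) (b (Sum.inl p))
      rw [this, h4, h1]
      congr 2
      exact congrFun h3 p
    | inr u =>
      cases u
      show (f : L ≃ₗ[F] L) z = (g : L ≃ₗ[F] L) z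
      rw [hfzZ _ f.2, hfzZ _ g.2]
      exact congrArg (fun t : F => t • z) h2
  have hPhi_surj : Function.Surjective Phi := by
    rintro ⟨⟨⟨g, l⟩, hl, hgl⟩, η⟩
    set fl : L →ₗ[F] L := Module.Basis.constr b F (fun i =>
      Sum.elim (fun p => s (g (bp p)) + η p • z) (fun _ => l • z) i) with hfldef
    have hfl_inl : ∀ p : Fin k × Bool,
        fl (b (Sum.inl p)) = s (g (bp p)) + η p • z := by
      intro p; simp [hfldef, Module.Basis.constr_basis]
    have hfl_z : fl z = l • z := by
      simp [hfldef, hzdef, Module.Basis.constr_basis]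
    have hmkfl : ∀ x : L,
        (Submodule.Quotient.mk (fl x) : L ⧸ Z) = g (Submodule.Quotient.mk x) := by
      have h : Z.mkQ ∘ₗ fl = (g : (L ⧸ Z) →ₗ[F] (L ⧸ Z)) ∘ₗ Z.mkQ := by
        apply b.ext; intro i
        cases i with
        | inl p =>
          simp only [LinearMap.comp_apply, Submodule.mkQ_apply, hfl_inl,
            LinearEquiv.coe_coe]
          rw [Submodule.Quotient.mk_add, Submodule.Quotient.mk_smul, hmkz,
            smul_zero, add_zero, hmks, ← hbp p]
        | inr u =>
          cases u
          simp only [LinearMap.comp_apply, Submodule.mkQ_apply, LinearEquiv.coe_coe]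
          rw [← hzdef, hfl_z, Submodule.Quotient.mk_smul, hmkz, smul_zero,
            map_zero]
      intro x
      simpa [Submodule.mkQ_apply] using LinearMap.congr_fun h x
    have hbrk : ∀ x y : L, fl ⁅x, y⁆ = ⁅fl x, fl y⁆ := by
      intro x y
      rw [hB x y, map_smul, hfl_z, hB (fl x) (fl y), hmkfl, hmkfl, hgl,
        smul_smul, mul_comm]
    have hflinj : Function.Injective fl := by
      rw [← LinearMap.ker_eq_bot]
      apply LinearMap.ker_eq_bot'.mpr
      intro m hm
      have h1 : g (Submodule.Quotient.mk m) = 0 := by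
        rw [← hmkfl, hm, Submodule.Quotient.mk_zero]
      have h2 : (Submodule.Quotient.mk m : L ⧸ Z) = 0 := g.map_eq_zero_iff.mp h1
      rw [Submodule.Quotient.mk_eq_zero] at h2
      obtain ⟨a, rfl⟩ := Submodule.mem_span_singleton.mp h2
      rw [map_smul, hfl_z, smul_smul] at hm
      rcases smul_eq_zero.mp hm with h | h
      · rw [mul_eq_zero] at h
        rcases h with h | h
        · rw [h, zero_smul]
        · exact absurd h hl
      · exact absurd h hzne
    have hflbij : Function.Bijective fl :=
      ⟨hflinj, LinearMap.injective_iff_surjective.mp hflinj⟩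
    set f : L ≃ₗ[F] L := LinearEquiv.ofBijective fl hflbij with hfdef
    have hfapp : ∀ x : L, f x = fl x := fun _ => rfl
    have hfA : f ∈ A := by
      intro x y
      rw [hfapp, hfapp, hfapp, hbrk]
    refine ⟨⟨f, hfA⟩, ?_⟩
    have hfbareq : fbar ⟨f, hfA⟩ = g := by
      apply LinearEquiv.toLinearMap_injective
      apply LinearMap.ext
      intro u
      obtain ⟨x, rfl⟩ := Submodule.Quotient.mk_surjective Z u
      simp only [LinearEquiv.coe_coe]
      rw [hfbar_mk]
      exact hmkfl x
    have hlameq : lam ⟨f, hfA⟩ = l := by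
      show c (f z) = l
      rw [hfapp, hfl_z, map_smul, hc_z, smul_eq_mul, mul_one]
    have hmueq : mu ⟨f, hfA⟩ = η := by
      funext p
      show c (f (b (Sum.inl p))) = η p
      rw [hfapp, hfl_inl, map_add, map_smul, hcs, hc_z, smul_eq_mul, mul_one,
        zero_add]
    rw [hPhidef]
    refine Prod.ext ?_ ?_
    · apply Subtype.ext
      exact Prod.ext hfbareq hlameq
    · exact hmueq
  -- assemble
  refine ⟨A, rfl, Equiv.ofBijective Phi ⟨hPhi_inj, hPhi_surj⟩, ?_, ?_, ?_⟩
  · intro f x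
    exact hfbar_mk f x
  · intro f p
    exact hWmem _
  · intro f g
    have hmul : ∀ x : L, ((f * g : A) : L ≃ₗ[F] L) x
        = (f : L ≃ₗ[F] L) ((g : L ≃ₗ[F] L) x) := fun _ => rfl
    refine ⟨?_, ?_, ?_⟩
    · show fbar (f * g) = fbar f * fbar g
      apply LinearEquiv.toLinearMap_injective
      apply LinearMap.ext
      intro u
      obtain ⟨x, rfl⟩ := Submodule.Quotient.mk_surjective Z u
      simp only [LinearEquiv.coe_coe]
      have h1 : (fbar f * fbar g) (Submodule.Quotient.mk x)
          = fbar f (fbar g (Submodule.Quotient.mk x)) := rfl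
      rw [h1, hfbar_mk, hfbar_mk, hfbar_mk, hmul]
    · show lam (f * g) = lam f * lam g
      have hfs : (f : L ≃ₗ[F] L) ((g : L ≃ₗ[F] L) z)
          = c ((g : L ≃ₗ[F] L) z) • (f : L ≃ₗ[F] L) z := by
        conv_lhs => rw [hfzZ _ g.2]
        rw [map_smul]
      show c (((f * g : A) : L ≃ₗ[F] L) z) = c ((f : L ≃ₗ[F] L) z) * c ((g : L ≃ₗ[F] L) z)
      rw [hmul, hfs, map_smul, smul_eq_mul, mul_comm]
    · show mu (f * g) = Matrix.vecMul (mu f)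
        (LinearMap.toMatrix bp bp ((fbar g : (L ⧸ Z) →ₗ[F] (L ⧸ Z)))) + lam f • mu g
      funext p
      have h1 : mu (f * g) p = c ((f : L ≃ₗ[F] L) ((g : L ≃ₗ[F] L) (b (Sum.inl p)))) := by
        show c (((f * g : A) : L ≃ₗ[F] L) (b (Sum.inl p))) = _
        rw [hmul]
      have h2 : (g : L ≃ₗ[F] L) (b (Sum.inl p))
          = s (fbar g (bp p)) + mu g p • z := by
        rw [hfx g (b (Sum.inl p)), ← hbp p]
      rw [h1, h2, map_add, map_smul, map_add, map_smul, hkey, hfzZ _ f.2,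
        map_smul, hc_z]
      simp only [smul_eq_mul, mul_one]
      have h3 : ∀ q : Fin k × Bool,
          (LinearMap.toMatrix bp bp ((fbar g : (L ⧸ Z) →ₗ[F] (L ⧸ Z)))) q p
            = bp.repr (fbar g (bp p)) q := by
        intro q
        rw [LinearMap.toMatrix_apply]
        rfl
      have h4 : Matrix.vecMul (mu f)
          (LinearMap.toMatrix bp bp ((fbar g : (L ⧸ Z) →ₗ[F] (L ⧸ Z)))) p
          = ∑ q : Fin k × Bool, mu f q *
              (LinearMap.toMatrix bp bp ((fbar g : (L ⧸ Z) →ₗ[F] (L ⧸ Z)))) q p := rfl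
      rw [Pi.add_apply, h4, Pi.smul_apply, smul_eq_mul,
        mul_comm (lam f) (mu g p)]
      refine congrArg₂ (· + ·) ?_ rfl
      refine Finset.sum_congr rfl fun q _ => ?_
      rw [h3 q, mul_comm]
end

section
/- Let Γ be the fine Z^{k+1}-grading on the Heisenberg algebra H_n (n = 2k+1) in which each of the basis vectors e_1,…,e_k,ê_1,…,ê_k,z spans a homogeneous component. Then the Weyl group W(Γ) = Aut(Γ)/Stab(Γ) is isomorphic to Z_2^k ⋊ S_k, where S_k acts by permuting the factors of Z_2^k. -/
namespace HFG

/-- Bool to Multiplicative ZMod 2. -/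
def bcast (β : Bool) : Multiplicative (ZMod 2) :=
  Multiplicative.ofAdd (if β then 1 else 0)

lemma bcast_xor (a c : Bool) : bcast (xor a c) = bcast a * bcast c := by
  revert a c; decide

lemma bcast_eq_one {a : Bool} : bcast a = 1 ↔ a = false := by revert a; decide

lemma bcast_decide (x : Multiplicative (ZMod 2)) :
    bcast (decide (x = Multiplicative.ofAdd 1)) = x := by revert x; decide

section Perm
variable {k : ℕ} (M : Type*) [CommGroup M]

/-- Permutation action on functions as a `MonoidHom` into `MulAut`. -/
def permHom : Equiv.Perm (Fin k) →* MulAut (Fin k → M) where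
  toFun σ :=
    { toEquiv := Equiv.arrowCongr σ (Equiv.refl M)
      map_mul' := fun x y => rfl }
  map_one' := by ext x i; rfl
  map_mul' σ τ := by ext x i; rfl

lemma permHom_apply (σ : Equiv.Perm (Fin k)) (x : Fin k → M) (i : Fin k) :
    permHom M σ x i = x (σ⁻¹ i) := rfl

end Perm

section Main
variable {F : Type*} [Field F] {L : Type*} [LieRing L] [LieAlgebra F L]
variable {k : ℕ} (b : Module.Basis ((Fin k × Bool) ⊕ Unit) F L)


lemma map_span_singleton (f : L ≃ₗ[F] L) (x : L) :
    Submodule.map (f : L →ₗ[F] L) (F ∙ x) = F ∙ f x := by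
  rw [Submodule.map_span, Set.image_singleton, LinearEquiv.coe_coe]

lemma span_b_inj {p q : ((Fin k × Bool) ⊕ Unit)} (h : (F ∙ b p) = F ∙ b q) : p = q := by
  by_contra hne
  have hmem : b p ∈ (F ∙ b q) := h ▸ Submodule.mem_span_singleton_self _
  obtain ⟨c, hc⟩ := Submodule.mem_span_singleton.mp hmem
  have := congrArg (fun x => b.repr x p) hc
  simp [Module.Basis.repr_self, Finsupp.single_apply, Ne.symm hne] at this

open Classical in
/-- The index permutation induced by `f`. -/
noncomputable def idxMap (f : L ≃ₗ[F] L) (p : ((Fin k × Bool) ⊕ Unit)) : ((Fin k × Bool) ⊕ Unit) :=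
  if h : ∃ q, Submodule.map (f : L →ₗ[F] L) (F ∙ b p) = F ∙ b q then h.choose else p

variable {b}

section IdxBasic
variable {f : L ≃ₗ[F] L}
  (hf : ∀ p, ∃ q, Submodule.map (f : L →ₗ[F] L) (F ∙ b p) = F ∙ b q)
include hf

lemma idxMap_spec (p : ((Fin k × Bool) ⊕ Unit)) :
    Submodule.map (f : L →ₗ[F] L) (F ∙ b p) = F ∙ b (idxMap b f p) := by
  rw [idxMap, dif_pos (hf p)]
  exact (hf p).choose_spec

lemma exists_smul (p : ((Fin k × Bool) ⊕ Unit)) : ∃ c : F, c ≠ 0 ∧ f (b p) = c • b (idxMap b f p) := by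
  have h := idxMap_spec hf p
  rw [map_span_singleton] at h
  have hmem : f (b p) ∈ (F ∙ b (idxMap b f p)) := h ▸ Submodule.mem_span_singleton_self _
  obtain ⟨c, hc⟩ := Submodule.mem_span_singleton.mp hmem
  refine ⟨c, fun h0 => ?_, hc.symm⟩
  rw [h0, zero_smul] at hc
  exact b.ne_zero p (f.injective (by simp [← hc]))

lemma idxMap_unique {p q : ((Fin k × Bool) ⊕ Unit)} {c : F} (hc : c ≠ 0) (h : f (b p) = c • b q) :
    idxMap b f p = q := by
  obtain ⟨c', hc', h'⟩ := exists_smul hf p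
  by_contra hne
  have h2 : c' • b (idxMap b f p) = c • b q := h'.symm.trans h
  have := congrArg (fun x => b.repr x q) h2
  simp [Module.Basis.repr_self, Finsupp.single_apply, hne] at this
  exact hc this.symm

lemma idxMap_inj : Function.Injective (idxMap b f) := by
  intro p p' h
  obtain ⟨c, hc, hcs⟩ := exists_smul hf p
  obtain ⟨c', hc', hcs'⟩ := exists_smul hf p'
  rw [h] at hcs
  have h2 : f (c' • b p) = f (c • b p') := by
    rw [map_smul, map_smul, hcs, hcs', smul_smul, smul_smul, mul_comm]
  have h3 := f.injective h2
  by_contra hne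
  have := congrArg (fun x => b.repr x p) h3
  simp [Module.Basis.repr_self, Finsupp.single_apply, Ne.symm hne, hc'] at this

lemma idxMap_bij : Function.Bijective (idxMap b f) :=
  Finite.injective_iff_bijective.mp (idxMap_inj hf)

end IdxBasic

lemma idxMap_one (p : ((Fin k × Bool) ⊕ Unit)) : idxMap b (1 : L ≃ₗ[F] L) p = p := by
  have hf : ∀ p : ((Fin k × Bool) ⊕ Unit), ∃ q, Submodule.map ((1 : L ≃ₗ[F] L) : L →ₗ[F] L) (F ∙ b p) = F ∙ b q :=
    fun p => ⟨p, by rw [map_span_singleton]; rfl⟩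
  exact idxMap_unique hf one_ne_zero (by simp)

lemma idxMap_mul {f g : L ≃ₗ[F] L}
    (hf : ∀ p, ∃ q, Submodule.map (f : L →ₗ[F] L) (F ∙ b p) = F ∙ b q)
    (hg : ∀ p, ∃ q, Submodule.map (g : L →ₗ[F] L) (F ∙ b p) = F ∙ b q)
    (p : ((Fin k × Bool) ⊕ Unit)) : idxMap b (f * g) p = idxMap b f (idxMap b g p) := by
  have hfg : ∀ p : ((Fin k × Bool) ⊕ Unit), ∃ q, Submodule.map ((f * g : L ≃ₗ[F] L) : L →ₗ[F] L) (F ∙ b p) = F ∙ b q := by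
    intro p
    exact ⟨idxMap b f (idxMap b g p), by
      rw [map_span_singleton]
      show (F ∙ f (g (b p))) = _
      obtain ⟨c, hc, hcs⟩ := exists_smul hg p
      obtain ⟨c', hc', hcs'⟩ := exists_smul hf (idxMap b g p)
      rw [hcs, map_smul, hcs', smul_smul]
      exact Submodule.span_singleton_smul_eq (IsUnit.mk0 _ (mul_ne_zero hc hc')) _⟩
  obtain ⟨c, hc, hcs⟩ := exists_smul hg p
  obtain ⟨c', hc', hcs'⟩ := exists_smul hf (idxMap b g p)
  refine idxMap_unique hfg (mul_ne_zero hc hc') ?_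
  show f (g (b p)) = _
  rw [hcs, map_smul, hcs', smul_smul]


section Lie
variable (hbr : ∀ i : Fin k, ⁅b (Sum.inl (i, false)), b (Sum.inl (i, true))⁆ = b (Sum.inr ()))
  (hz : ∀ p q : ((Fin k × Bool) ⊕ Unit), ¬ HeisPair p q → ⁅b p, b q⁆ = 0)
include hbr hz

lemma bracket_ne_iff {p q : ((Fin k × Bool) ⊕ Unit)} : ⁅b p, b q⁆ ≠ 0 ↔ HeisPair p q := by
  constructor
  · intro h
    by_contra hn
    exact h (hz p q hn)
  · rintro ⟨i, (⟨rfl, rfl⟩ | ⟨rfl, rfl⟩)⟩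
    · rw [hbr i]
      exact b.ne_zero _
    · rw [← lie_skew, hbr i, neg_ne_zero]
      exact b.ne_zero _

variable {f : L ≃ₗ[F] L}
  (hfc : ∀ p, ∃ q, Submodule.map (f : L →ₗ[F] L) (F ∙ b p) = F ∙ b q)
  (hfl : ∀ x y : L, f ⁅x, y⁆ = ⁅f x, f y⁆)
include hfc hfl

lemma idxMap_heisPair {p q : ((Fin k × Bool) ⊕ Unit)} (h : HeisPair p q) :
    HeisPair (idxMap b f p) (idxMap b f q) := by
  obtain ⟨c, hc, hcs⟩ := exists_smul hfc p
  obtain ⟨c', hc', hcs'⟩ := exists_smul hfc q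
  rw [← bracket_ne_iff hbr hz]
  have hne : ⁅b p, b q⁆ ≠ 0 := (bracket_ne_iff hbr hz).mpr h
  have h2 : f ⁅b p, b q⁆ ≠ 0 := fun h0 => hne (f.injective (by simp [h0]))
  rw [hfl, hcs, hcs', smul_lie, lie_smul] at h2
  intro h0
  rw [h0, smul_zero, smul_zero] at h2
  exact h2 rfl

/-- The `S_k` part of the induced map. -/
noncomputable def sigF (i : Fin k) : Fin k :=
  (idxMap b f (Sum.inl (i, false))).elim Prod.fst (fun _ => i)

/-- The `Z_2^k` part of the induced map. -/
noncomputable def epsF (i : Fin k) : Bool :=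
  (idxMap b f (Sum.inl (i, false))).elim Prod.snd (fun _ => false)

omit hbr hz hfc hfl

lemma idxMap_inl
    (hbr : ∀ i : Fin k, ⁅b (Sum.inl (i, false)), b (Sum.inl (i, true))⁆ = b (Sum.inr ()))
    (hz : ∀ p q : ((Fin k × Bool) ⊕ Unit), ¬ HeisPair p q → ⁅b p, b q⁆ = 0)
    (hfc : ∀ p, ∃ q, Submodule.map (f : L →ₗ[F] L) (F ∙ b p) = F ∙ b q)
    (hfl : ∀ x y : L, f ⁅x, y⁆ = ⁅f x, f y⁆)
    (i : Fin k) (β : Bool) :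
    idxMap b f (Sum.inl (i, β)) =
      Sum.inl ((sigF (b := b) (f := f) i), xor (epsF (b := b) (f := f) i) β) := by
  have hp : HeisPair (Sum.inl (i, false) : ((Fin k × Bool) ⊕ Unit)) (Sum.inl (i, true)) := ⟨i, Or.inl ⟨rfl, rfl⟩⟩
  obtain ⟨j, (⟨h1, h2⟩ | ⟨h1, h2⟩)⟩ := idxMap_heisPair hbr hz hfc hfl hp
  · have hs : sigF (b := b) (f := f) i = j := by simp [sigF, h1]
    have he : epsF (b := b) (f := f) i = false := by simp [epsF, h1]
    cases β
    · rw [hs, he]; exact h1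
    · rw [hs, he]; exact h2
  · have hs : sigF (b := b) (f := f) i = j := by simp [sigF, h1]
    have he : epsF (b := b) (f := f) i = true := by simp [epsF, h1]
    cases β
    · rw [hs, he]; exact h1
    · rw [hs, he]; exact h2


lemma sigF_inj
    (hbr : ∀ i : Fin k, ⁅b (Sum.inl (i, false)), b (Sum.inl (i, true))⁆ = b (Sum.inr ()))
    (hz : ∀ p q : ((Fin k × Bool) ⊕ Unit), ¬ HeisPair p q → ⁅b p, b q⁆ = 0)
    (hfc : ∀ p, ∃ q, Submodule.map (f : L →ₗ[F] L) (F ∙ b p) = F ∙ b q)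
    (hfl : ∀ x y : L, f ⁅x, y⁆ = ⁅f x, f y⁆) :
    Function.Injective (sigF (b := b) (f := f)) := by
  intro i j h
  have h1 := idxMap_inl hbr hz hfc hfl i (epsF (b := b) (f := f) i)
  have h2 := idxMap_inl hbr hz hfc hfl j (epsF (b := b) (f := f) j)
  rw [Bool.xor_self] at h1 h2
  rw [h, ← h2] at h1
  have h3 := idxMap_inj hfc h1
  have h4 := Sum.inl.inj h3
  exact congrArg Prod.fst h4

set_option maxHeartbeats 1000000 in
lemma sig_eps_mul {g : L ≃ₗ[F] L}
    (hbr : ∀ i : Fin k, ⁅b (Sum.inl (i, false)), b (Sum.inl (i, true))⁆ = b (Sum.inr ()))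
    (hz : ∀ p q : ((Fin k × Bool) ⊕ Unit), ¬ HeisPair p q → ⁅b p, b q⁆ = 0)
    (hfc : ∀ p, ∃ q, Submodule.map (f : L →ₗ[F] L) (F ∙ b p) = F ∙ b q)
    (hfl : ∀ x y : L, f ⁅x, y⁆ = ⁅f x, f y⁆)
    (hgc : ∀ p, ∃ q, Submodule.map (g : L →ₗ[F] L) (F ∙ b p) = F ∙ b q)
    (hgl : ∀ x y : L, g ⁅x, y⁆ = ⁅g x, g y⁆)
    (hfgc : ∀ p, ∃ q, Submodule.map ((f * g : L ≃ₗ[F] L) : L →ₗ[F] L) (F ∙ b p) = F ∙ b q)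
    (i : Fin k) :
    sigF (b := b) (f := f * g) i = sigF (b := b) (f := f) (sigF (b := b) (f := g) i) ∧
      epsF (b := b) (f := f * g) i =
        xor (epsF (b := b) (f := f) (sigF (b := b) (f := g) i)) (epsF (b := b) (f := g) i) := by
  have hfgl : ∀ x y : L, (f * g) ⁅x, y⁆ = ⁅(f * g) x, (f * g) y⁆ := by
    intro x y
    show f (g _) = ⁅f (g x), f (g y)⁆
    rw [hgl, hfl]
  have hA := idxMap_inl hbr hz hfgc hfgl i false
  rw [Bool.xor_false] at hA
  have h1 := idxMap_inl hbr hz hgc hgl i false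
  rw [Bool.xor_false] at h1
  have hB : idxMap b (f * g) (Sum.inl (i, false)) =
      Sum.inl (sigF (b := b) (f := f) (sigF (b := b) (f := g) i),
        xor (epsF (b := b) (f := f) (sigF (b := b) (f := g) i)) (epsF (b := b) (f := g) i)) := by
    rw [idxMap_mul hfc hgc, h1, idxMap_inl hbr hz hfc hfl]
  have h2 := Sum.inl.inj (hA.symm.trans hB)
  exact ⟨congrArg Prod.fst h2, congrArg Prod.snd h2⟩

lemma sig_eps_one (i : Fin k) :
    sigF (b := b) (f := (1 : L ≃ₗ[F] L)) i = i ∧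
      epsF (b := b) (f := (1 : L ≃ₗ[F] L)) i = false := by
  constructor
  · simp [sigF, idxMap_one]
  · simp [epsF, idxMap_one]

end Lie


section Std
variable (σ : Equiv.Perm (Fin k)) (ν : Fin k → Bool)

/-- The index permutation for the standard automorphism. -/
def eIdx : ((Fin k × Bool) ⊕ Unit) ≃ ((Fin k × Bool) ⊕ Unit) :=
  Equiv.sumCongr
    { toFun := fun x => (σ x.1, xor (ν (σ x.1)) x.2)
      invFun := fun y => (σ⁻¹ y.1, xor (ν y.1) y.2)
      left_inv := by
        rintro ⟨i, β⟩
        simp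
      right_inv := by
        rintro ⟨j, γ⟩
        simp }
    (Equiv.refl _)

lemma eIdx_inl (i : Fin k) (β : Bool) :
    eIdx σ ν (Sum.inl (i, β)) = Sum.inl (σ i, xor (ν (σ i)) β) := rfl

lemma eIdx_inr : eIdx σ ν (Sum.inr ()) = Sum.inr () := rfl

/-- The scaling coefficients of the standard automorphism. -/
def uCoef : ((Fin k × Bool) ⊕ Unit) → F :=
  Sum.elim (fun x => if x.2 && ν (σ x.1) then -1 else 1) (fun _ => 1)

lemma uCoef_ne_zero (p : ((Fin k × Bool) ⊕ Unit)) : uCoef (F := F) σ ν p ≠ 0 := by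
  rcases p with ⟨i, β⟩ | u
  · rw [uCoef]
    dsimp only [Sum.elim_inl]
    split
    · exact neg_ne_zero.mpr one_ne_zero
    · exact one_ne_zero
  · exact one_ne_zero

variable (b)

/-- The standard automorphism realizing `(ν, σ)`. -/
noncomputable def stdAut : L ≃ₗ[F] L :=
  LinearEquiv.ofLinear
    (b.constr F fun p => uCoef (F := F) σ ν p • b (eIdx σ ν p))
    (b.constr F fun q =>
      (uCoef (F := F) σ ν ((eIdx σ ν).symm q))⁻¹ • b ((eIdx σ ν).symm q))
    (by
      apply b.ext
      intro q
      simp only [LinearMap.coe_comp, Function.comp_apply, Module.Basis.constr_basis, map_smul,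
        LinearMap.id_coe, id_eq, Equiv.apply_symm_apply]
      rw [smul_smul, inv_mul_cancel₀ (uCoef_ne_zero σ ν _), one_smul])
    (by
      apply b.ext
      intro p
      simp only [LinearMap.coe_comp, Function.comp_apply, Module.Basis.constr_basis, map_smul,
        LinearMap.id_coe, id_eq, Equiv.symm_apply_apply]
      rw [smul_smul, mul_inv_cancel₀ (uCoef_ne_zero σ ν _), one_smul])

lemma stdAut_apply (p : ((Fin k × Bool) ⊕ Unit)) :
    stdAut b σ ν (b p) = uCoef (F := F) σ ν p • b (eIdx σ ν p) := by
  rw [stdAut, LinearEquiv.ofLinear_apply, Module.Basis.constr_basis]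

lemma stdAut_comp (p : ((Fin k × Bool) ⊕ Unit)) :
    Submodule.map ((stdAut b σ ν : L ≃ₗ[F] L) : L →ₗ[F] L) (F ∙ b p) = F ∙ b (eIdx σ ν p) := by
  rw [map_span_singleton, stdAut_apply]
  exact Submodule.span_singleton_smul_eq (IsUnit.mk0 _ (uCoef_ne_zero σ ν p)) _

lemma heisPair_eIdx {p q : ((Fin k × Bool) ⊕ Unit)}
    (h : HeisPair (eIdx σ ν p) (eIdx σ ν q)) : HeisPair p q := by
  obtain ⟨j, (⟨h1, h2⟩ | ⟨h1, h2⟩)⟩ := h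
  · have hp : p = (eIdx σ ν).symm (Sum.inl (j, false)) := by
      rw [← h1, Equiv.symm_apply_apply]
    have hq : q = (eIdx σ ν).symm (Sum.inl (j, true)) := by
      rw [← h2, Equiv.symm_apply_apply]
    refine ⟨σ⁻¹ j, ?_⟩
    cases hν : ν j
    · left
      constructor
      · rw [hp]; simp [eIdx, hν]
      · rw [hq]; simp [eIdx, hν]
    · right
      constructor
      · rw [hp]; simp [eIdx, hν]
      · rw [hq]; simp [eIdx, hν]
  · have hp : p = (eIdx σ ν).symm (Sum.inl (j, true)) := by
      rw [← h1, Equiv.symm_apply_apply]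
    have hq : q = (eIdx σ ν).symm (Sum.inl (j, false)) := by
      rw [← h2, Equiv.symm_apply_apply]
    refine ⟨σ⁻¹ j, ?_⟩
    cases hν : ν j
    · right
      constructor
      · rw [hp]; simp [eIdx, hν]
      · rw [hq]; simp [eIdx, hν]
    · left
      constructor
      · rw [hp]; simp [eIdx, hν]
      · rw [hq]; simp [eIdx, hν]

lemma stdAut_lie
    (hbr : ∀ i : Fin k, ⁅b (Sum.inl (i, false)), b (Sum.inl (i, true))⁆ = b (Sum.inr ()))
    (hz : ∀ p q : ((Fin k × Bool) ⊕ Unit), ¬ HeisPair p q → ⁅b p, b q⁆ = 0)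
    (x y : L) : stdAut b σ ν ⁅x, y⁆ = ⁅stdAut b σ ν x, stdAut b σ ν y⁆ := by
  let f := stdAut b σ ν
  let B1 : L →ₗ[F] L →ₗ[F] L := LinearMap.mk₂ F (fun x y => f ⁅x, y⁆)
    (fun m₁ m₂ n => by rw [add_lie, map_add])
    (fun c m n => by rw [smul_lie, map_smul])
    (fun m n₁ n₂ => by rw [lie_add, map_add])
    (fun c m n => by rw [lie_smul, map_smul])
  let B2 : L →ₗ[F] L →ₗ[F] L := LinearMap.mk₂ F (fun x y => ⁅f x, f y⁆)
    (fun m₁ m₂ n => by rw [map_add, add_lie])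
    (fun c m n => by rw [map_smul, smul_lie])
    (fun m n₁ n₂ => by rw [map_add, lie_add])
    (fun c m n => by rw [map_smul, lie_smul])
  have hB : B1 = B2 := by
    apply LinearMap.ext_basis b b
    intro p q
    show f ⁅b p, b q⁆ = ⁅f (b p), f (b q)⁆
    have hrhs : ⁅f (b p), f (b q)⁆ =
        (uCoef (F := F) σ ν p * uCoef (F := F) σ ν q) • ⁅b (eIdx σ ν p), b (eIdx σ ν q)⁆ := by
      rw [stdAut_apply, stdAut_apply, smul_lie, lie_smul, smul_smul]
    by_cases h : HeisPair p q
    · obtain ⟨i, (⟨rfl, rfl⟩ | ⟨rfl, rfl⟩)⟩ := h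
      · rw [hbr i]
        rw [hrhs]
        show f (b (Sum.inr ())) = _
        rw [stdAut_apply]
        rw [eIdx_inl, eIdx_inl, Bool.xor_false, Bool.xor_true]
        cases hν : ν (σ i)
        · simp only [uCoef, eIdx_inr, Sum.elim_inl, Sum.elim_inr, hν, Bool.not_false,
            Bool.and_false, Bool.and_true, if_false]
          rw [hbr (σ i)]
          norm_num
        · simp only [uCoef, eIdx_inr, Sum.elim_inl, Sum.elim_inr, hν, Bool.not_true,
            Bool.and_false, Bool.and_true, if_true]
          rw [← lie_skew, hbr (σ i)]
          norm_num
      · rw [← lie_skew, hbr i, map_neg]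
        rw [hrhs]
        show -(f (b (Sum.inr ()))) = _
        rw [stdAut_apply]
        rw [eIdx_inl, eIdx_inl, Bool.xor_false, Bool.xor_true]
        cases hν : ν (σ i)
        · simp only [uCoef, eIdx_inr, Sum.elim_inl, Sum.elim_inr, hν, Bool.not_false,
            Bool.and_false, Bool.and_true, if_false]
          rw [← lie_skew, hbr (σ i)]
          norm_num
        · simp only [uCoef, eIdx_inr, Sum.elim_inl, Sum.elim_inr, hν, Bool.not_true,
            Bool.and_false, Bool.and_true, if_true]
          rw [hbr (σ i)]
          norm_num
    · rw [hz p q h, map_zero, hrhs, hz _ _ (fun hc => h (heisPair_eIdx σ ν hc)), smul_zero]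
  have := congrFun (congrArg (fun (B : L →ₗ[F] L →ₗ[F] L) => (B x : L → L)) hB) y
  exact this


lemma stdAut_cond
    (p : ((Fin k × Bool) ⊕ Unit)) :
    ∃ q, Submodule.map ((stdAut b σ ν : L ≃ₗ[F] L) : L →ₗ[F] L) (F ∙ b p) = F ∙ b q :=
  ⟨eIdx σ ν p, stdAut_comp b σ ν p⟩

lemma idxMap_stdAut (p : ((Fin k × Bool) ⊕ Unit)) :
    idxMap b (stdAut b σ ν) p = eIdx σ ν p :=
  idxMap_unique (fun p => stdAut_cond b σ ν p) (uCoef_ne_zero σ ν p) (stdAut_apply b σ ν p)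

lemma sigF_stdAut (i : Fin k) : sigF (b := b) (f := stdAut b σ ν) i = σ i := by
  simp [sigF, idxMap_stdAut, eIdx_inl]

lemma epsF_stdAut (i : Fin k) : epsF (b := b) (f := stdAut b σ ν) i = ν (σ i) := by
  simp [epsF, idxMap_stdAut, eIdx_inl]

end Std

lemma mul_cond {f g : L ≃ₗ[F] L}
    (hfc : ∀ p, ∃ q, Submodule.map (f : L →ₗ[F] L) (F ∙ b p) = F ∙ b q)
    (hgc : ∀ p, ∃ q, Submodule.map (g : L →ₗ[F] L) (F ∙ b p) = F ∙ b q)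
    (p : ((Fin k × Bool) ⊕ Unit)) :
    ∃ q, Submodule.map ((f * g : L ≃ₗ[F] L) : L →ₗ[F] L) (F ∙ b p) = F ∙ b q := by
  refine ⟨idxMap b f (idxMap b g p), ?_⟩
  rw [map_span_singleton]
  show (F ∙ f (g (b p))) = _
  obtain ⟨c, hc, hcs⟩ := exists_smul hgc p
  obtain ⟨c', hc', hcs'⟩ := exists_smul hfc (idxMap b g p)
  rw [hcs, map_smul, hcs', smul_smul]
  exact Submodule.span_singleton_smul_eq (IsUnit.mk0 _ (mul_ne_zero hc hc')) _

lemma inv_cond {f : L ≃ₗ[F] L}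
    (hfc : ∀ p, ∃ q, Submodule.map (f : L →ₗ[F] L) (F ∙ b p) = F ∙ b q)
    (p : ((Fin k × Bool) ⊕ Unit)) :
    ∃ q, Submodule.map ((f⁻¹ : L ≃ₗ[F] L) : L →ₗ[F] L) (F ∙ b p) = F ∙ b q := by
  obtain ⟨q, hq⟩ := (idxMap_bij hfc).2 p
  refine ⟨q, ?_⟩
  have h1 : Submodule.map (f : L →ₗ[F] L) (F ∙ b q) = F ∙ b p := by
    rw [idxMap_spec hfc q, hq]
  rw [← h1, ← Submodule.map_comp]
  have h2 : ((f⁻¹ : L ≃ₗ[F] L) : L →ₗ[F] L).comp (f : L →ₗ[F] L) = LinearMap.id := by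
    ext x
    exact f.symm_apply_apply x
  rw [h2, Submodule.map_id]

end Main
end HFG

open HFG in
set_option maxHeartbeats 1000000 in
/-- The Weyl group of the fine `ℤ^{k+1}`-grading of the Heisenberg algebra
`H_n` (each standard basis vector spans a homogeneous component) is
`ℤ_2^k ⋊ S_k`: there is a group homomorphism from the group `Aut(Γ)` of
automorphisms permuting the homogeneous components onto the semidirect product
(with `S_k` permuting the factors of `ℤ_2^k`) whose kernel is exactly the
stabilizer `Stab(Γ)`. -/
theorem heisenberg_fine_grading_weyl_group
    (F : Type*) [Field F] [IsAlgClosed F] [CharZero F]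
    (L : Type*) [LieRing L] [LieAlgebra F L] (k : ℕ)
    (b : Module.Basis ((Fin k × Bool) ⊕ Unit) F L)
    (hbr : ∀ i : Fin k, ⁅b (Sum.inl (i, false)), b (Sum.inl (i, true))⁆ = b (Sum.inr ()))
    (hz : ∀ p q : (Fin k × Bool) ⊕ Unit, ¬ HeisPair p q → ⁅b p, b q⁆ = 0)
    -- the homogeneous components of the fine grading Γ
    (C : ((Fin k × Bool) ⊕ Unit) → Submodule F L) (hC : ∀ p, C p = F ∙ b p) :
    ∃ AutΓ : Subgroup (L ≃ₗ[F] L),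
      (↑AutΓ = {f : L ≃ₗ[F] L | (∀ x y : L, f ⁅x, y⁆ = ⁅f x, f y⁆) ∧
        ∀ p, ∃ q, (C p).map (f : L →ₗ[F] L) = C q}) ∧
      ∃ φ : Equiv.Perm (Fin k) →* MulAut (Fin k → Multiplicative (ZMod 2)),
        (∀ (σ : Equiv.Perm (Fin k)) (x : Fin k → Multiplicative (ZMod 2)) (i : Fin k),
          φ σ x i = x (σ⁻¹ i)) ∧
        ∃ θ : AutΓ →* SemidirectProduct (Fin k → Multiplicative (ZMod 2))
            (Equiv.Perm (Fin k)) φ,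
          Function.Surjective θ ∧
          ∀ f : AutΓ, θ f = 1 ↔ ∀ p, (C p).map ((f : L ≃ₗ[F] L) : L →ₗ[F] L) = C p := by
  classical
  set S : Set (L ≃ₗ[F] L) := {f : L ≃ₗ[F] L | (∀ x y : L, f ⁅x, y⁆ = ⁅f x, f y⁆) ∧
        ∀ p, ∃ q, (C p).map (f : L →ₗ[F] L) = C q} with hS
  have hone : (1 : L ≃ₗ[F] L) ∈ S := by
    refine ⟨fun x y => rfl, fun p => ⟨p, ?_⟩⟩
    simp [Submodule.map_id]
  have hmul' : ∀ f g : L ≃ₗ[F] L, f ∈ S → g ∈ S → f * g ∈ S := by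
    rintro f g ⟨hfl, hfc⟩ ⟨hgl, hgc⟩
    refine ⟨fun x y => ?_, fun p => ?_⟩
    · show f (g ⁅x, y⁆) = ⁅f (g x), f (g y)⁆
      rw [hgl, hfl]
    · simp only [hC] at hfc hgc ⊢
      exact mul_cond (fun p => hfc p) (fun p => hgc p) p
  have hinv' : ∀ f : L ≃ₗ[F] L, f ∈ S → f⁻¹ ∈ S := by
    rintro f ⟨hfl, hfc⟩
    refine ⟨fun x y => ?_, fun p => ?_⟩
    · apply f.injective
      show f (f.symm ⁅x, y⁆) = f ⁅f.symm x, f.symm y⁆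
      rw [hfl, f.apply_symm_apply, f.apply_symm_apply, f.apply_symm_apply]
    · simp only [hC] at hfc ⊢
      exact inv_cond (fun p => hfc p) p
  let AutΓ : Subgroup (L ≃ₗ[F] L) :=
    { carrier := S
      mul_mem' := fun hf hg => hmul' _ _ hf hg
      one_mem' := hone
      inv_mem' := fun hf => hinv' _ hf }
  have hmemS : ∀ f : L ≃ₗ[F] L, f ∈ AutΓ ↔ f ∈ S := fun f => Iff.rfl
  refine ⟨AutΓ, rfl, ?_⟩
  refine ⟨permHom (Multiplicative (ZMod 2)), fun σ x i => rfl, ?_⟩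
  have hmem : ∀ f : AutΓ,
      (∀ x y : L, (f : L ≃ₗ[F] L) ⁅x, y⁆ = ⁅(f : L ≃ₗ[F] L) x, (f : L ≃ₗ[F] L) y⁆) ∧
      ∀ p, ∃ q, Submodule.map ((f : L ≃ₗ[F] L) : L →ₗ[F] L) (F ∙ b p) = F ∙ b q := by
    intro f
    obtain ⟨h1, h2⟩ := (hmemS _).mp f.2
    refine ⟨h1, fun p => ?_⟩
    obtain ⟨q, hq⟩ := h2 p
    exact ⟨q, by rw [← hC p, hq, hC q]⟩
  -- σ component
  have hbij : ∀ f : AutΓ, Function.Bijective (sigF (b := b) (f := (f : L ≃ₗ[F] L))) :=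
    fun f => Finite.injective_iff_bijective.mp
      (sigF_inj hbr hz (hmem f).2 (hmem f).1)
  let σfun : AutΓ → Equiv.Perm (Fin k) := fun f => Equiv.ofBijective _ (hbij f)
  have hσfun : ∀ (f : AutΓ) (i : Fin k), σfun f i = sigF (b := b) (f := (f : L ≃ₗ[F] L)) i :=
    fun f i => rfl
  let θfun : AutΓ → SemidirectProduct (Fin k → Multiplicative (ZMod 2))
      (Equiv.Perm (Fin k)) (permHom (Multiplicative (ZMod 2))) :=
    fun f => ⟨fun i => bcast (epsF (b := b) (f := (f : L ≃ₗ[F] L)) ((σfun f).symm i)), σfun f⟩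
  have hθright : ∀ f : AutΓ, (θfun f).right = σfun f := fun f => rfl
  have hθleft : ∀ (f : AutΓ) (i : Fin k),
      (θfun f).left i = bcast (epsF (b := b) (f := (f : L ≃ₗ[F] L)) ((σfun f).symm i)) :=
    fun f i => rfl
  -- multiplicativity
  have hmul : ∀ f g : AutΓ, θfun (f * g) = θfun f * θfun g := by
    intro f g
    have hfgc := (hmem (f * g)).2
    have hfg1 : ((f * g : AutΓ) : L ≃ₗ[F] L) = (f : L ≃ₗ[F] L) * (g : L ≃ₗ[F] L) := rfl
    rw [hfg1] at hfgc
    have hse := fun i => sig_eps_mul hbr hz (hmem f).2 (hmem f).1 (hmem g).2 (hmem g).1 hfgc i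
    have hright : σfun (f * g) = σfun f * σfun g := by
      apply Equiv.ext
      intro i
      rw [hσfun, Equiv.Perm.mul_apply, hσfun, hσfun, hfg1]
      exact (hse i).1
    apply SemidirectProduct.ext
    · funext i
      rw [SemidirectProduct.mul_left, hθleft (f * g) i]
      have hsymm : ((σfun (f * g)).symm i) = (σfun g).symm ((σfun f).symm i) := by
        rw [hright]; rfl
      rw [hsymm, hfg1]
      rw [(hse _).2]
      rw [bcast_xor]
      have hg : sigF (b := b) (f := (g : L ≃ₗ[F] L)) ((σfun g).symm ((σfun f).symm i)) =
          (σfun f).symm i := by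
        rw [← hσfun]
        exact (σfun g).apply_symm_apply _
      rw [hg]
      rfl
    · rw [SemidirectProduct.mul_right, hθright, hθright, hθright, hright]
  let θ : AutΓ →* SemidirectProduct (Fin k → Multiplicative (ZMod 2))
      (Equiv.Perm (Fin k)) (permHom (Multiplicative (ZMod 2))) :=
    MonoidHom.mk' θfun hmul
  refine ⟨θ, ?_, ?_⟩
  -- surjectivity
  · rintro ⟨n, σ⟩
    set ν : Fin k → Bool := fun i => decide (n i = Multiplicative.ofAdd 1) with hν
    have hfmem : stdAut b σ ν ∈ AutΓ := by
      rw [hmemS]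
      refine ⟨stdAut_lie b σ ν hbr hz, fun p => ⟨eIdx σ ν p, ?_⟩⟩
      rw [hC, hC]
      exact stdAut_comp b σ ν p
    refine ⟨⟨stdAut b σ ν, hfmem⟩, ?_⟩
    have hσeq : σfun ⟨stdAut b σ ν, hfmem⟩ = σ := by
      apply Equiv.ext
      intro i
      rw [hσfun]
      exact sigF_stdAut b σ ν i
    apply SemidirectProduct.ext
    · funext i
      show bcast (epsF (b := b) (f := stdAut b σ ν) ((σfun ⟨stdAut b σ ν, hfmem⟩).symm i)) = n i
      rw [hσeq, epsF_stdAut b σ ν, Equiv.apply_symm_apply]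
      exact bcast_decide (n i)
    · show σfun ⟨stdAut b σ ν, hfmem⟩ = σ
      exact hσeq
  -- kernel
  · intro f
    constructor
    · intro hθ1
      have hσ1 : σfun f = 1 := congrArg SemidirectProduct.right hθ1
      have hε : ∀ i, epsF (b := b) (f := (f : L ≃ₗ[F] L)) i = false := by
        intro i
        have h1 : bcast (epsF (b := b) (f := (f : L ≃ₗ[F] L)) ((σfun f).symm i)) = 1 :=
          congrFun (congrArg SemidirectProduct.left hθ1) i
        rw [hσ1] at h1
        exact bcast_eq_one.mp h1
      have hidx : ∀ p, idxMap b (f : L ≃ₗ[F] L) p = p := by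
        have hinl : ∀ (i : Fin k) (β : Bool),
            idxMap b (f : L ≃ₗ[F] L) (Sum.inl (i, β)) = Sum.inl (i, β) := by
          intro i β
          rw [idxMap_inl hbr hz (hmem f).2 (hmem f).1, hε, Bool.false_xor]
          have : sigF (b := b) (f := (f : L ≃ₗ[F] L)) i = i := by
            rw [← hσfun, hσ1]; rfl
          rw [this]
        intro p
        rcases p with ⟨i, β⟩ | u
        · exact hinl i β
        · cases u
          rcases h : idxMap b (f : L ≃ₗ[F] L) (Sum.inr ()) with ⟨i, β⟩ | u
          · exfalso
            have h2 : idxMap b (f : L ≃ₗ[F] L) (Sum.inl (i, β)) =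
                idxMap b (f : L ≃ₗ[F] L) (Sum.inr ()) := by rw [h, hinl]
            exact Sum.inl_ne_inr (idxMap_inj (hmem f).2 h2)
          · cases u; rfl
      intro p
      rw [hC]
      rw [idxMap_spec (hmem f).2 p, hidx]
    · intro hfix
      have hidx : ∀ p, idxMap b (f : L ≃ₗ[F] L) p = p := by
        intro p
        apply span_b_inj (b := b)
        rw [← idxMap_spec (hmem f).2 p, ← hC p, hfix p, hC]
      have hσ1 : σfun f = 1 := by
        apply Equiv.ext
        intro i
        rw [hσfun]
        simp [sigF, hidx]
      have hε : ∀ i, epsF (b := b) (f := (f : L ≃ₗ[F] L)) i = false := by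
        intro i
        simp [epsF, hidx]
      apply SemidirectProduct.ext
      · funext i
        show bcast (epsF (b := b) (f := (f : L ≃ₗ[F] L)) ((σfun f).symm i)) = 1
        rw [hσ1, hε]
        exact bcast_eq_one.mpr rfl
      · show σfun f = 1
        exact hσ1
end

section
/- Let H_{n,m} be the Heisenberg superalgebra over an algebraically closed field of characteristic ≠ 2, with even part of dimension n = 2k+1 and odd part of dimension m. If H_{n,m} is graded by an abelian group G (as a superalgebra), then there is a homogeneous basis {z, e_1, ê_1, …, e_k, ê_k, u_1, v_1, …, u_r, v_r, z_1, …, z_q} (with 2r + q = m) such that the only nonzero brackets are [e_i,ê_i] = [u_j,v_j] = [z_l,z_l] = z. -/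
set_option maxHeartbeats 1000000
set_option synthInstance.maxHeartbeats 400000


/-- Index type for a homogeneous basis of a Heisenberg superalgebra:
even part `{e_i, ê_i, z}`, odd part `{u_j, v_j, z_l}`. -/
abbrev SupIdx (k r q : ℕ) := ((Fin k × Bool) ⊕ Unit) ⊕ ((Fin r × Bool) ⊕ Fin q)

/-- Pairs of indices with possibly nonzero bracket: `(e_i, ê_i)`, `(ê_i, e_i)`,
`(u_j, v_j)`, `(v_j, u_j)` and `(z_l, z_l)`. -/
def SupPair {k r q : ℕ} (p p' : SupIdx k r q) : Prop :=
  (∃ i : Fin k, ∃ s : Bool,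
    p = Sum.inl (Sum.inl (i, s)) ∧ p' = Sum.inl (Sum.inl (i, !s))) ∨
  (∃ j : Fin r, ∃ s : Bool,
    p = Sum.inr (Sum.inl (j, s)) ∧ p' = Sum.inr (Sum.inl (j, !s))) ∨
  (∃ l : Fin q, p = Sum.inr (Sum.inr l) ∧ p' = Sum.inr (Sum.inr l))

def gram (F : Type*) [Field F] {k r q : ℕ} : SupIdx k r q → SupIdx k r q → F
| .inl (.inl (i,s)), .inl (.inl (i',s')) =>
    if i = i' ∧ s' = !s then (if s then -1 else 1) else 0
| .inr (.inl (j,s)), .inr (.inl (j',s')) => if j = j' ∧ s' = !s then 1 else 0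
| .inr (.inr l), .inr (.inr l') => if l = l' then 1 else 0
| _, _ => 0

def partner {k r q : ℕ} : SupIdx k r q → SupIdx k r q
| .inl (.inl (i,s)) => .inl (.inl (i, !s))
| .inl (.inr _) => .inl (.inr ())
| .inr (.inl (j,s)) => .inr (.inl (j, !s))
| .inr (.inr l) => .inr (.inr l)

def dd (F : Type*) [Field F] {k r q : ℕ} : SupIdx k r q → F
| .inl (.inl (_, true)) => -1
| _ => 1

theorem dd_ne_zero (F : Type*) [Field F] {k r q : ℕ} (p : SupIdx k r q) : dd F p ≠ 0 := by
  rcases p with ((⟨i,s⟩|⟨⟩)|(⟨j,s⟩|l)) <;> first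
    | (cases s <;> simp [dd])
    | simp [dd]

theorem gram_partner (F : Type*) [Field F] {k r q : ℕ} (p p0 : SupIdx k r q)
    (h : p0 ≠ Sum.inl (Sum.inr ())) :
    gram F p (partner p0) = if p = p0 then dd F p0 else 0 := by
  rcases p0 with ((⟨i0,s0⟩|⟨⟩)|(⟨j0,s0⟩|l0))
  · rcases p with ((⟨i,s⟩|⟨⟩)|(⟨j,s⟩|l)) <;>
      simp only [gram, partner, dd] <;>
      try simp
    · cases s <;> cases s0 <;> simp [eq_comm]
  · exact absurd rfl h
  · rcases p with ((⟨i,s⟩|⟨⟩)|(⟨j,s⟩|l)) <;>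
      simp only [gram, partner, dd] <;>
      try simp
    · cases s <;> cases s0 <;> simp [eq_comm]
  · rcases p with ((⟨i,s⟩|⟨⟩)|(⟨j,s⟩|l)) <;>
      simp only [gram, partner, dd] <;> simp [eq_comm]

theorem gram_not_supPair (F : Type*) [Field F] {k r q : ℕ} (p p' : SupIdx k r q)
    (h : ¬ SupPair p p') : gram F p p' = 0 := by
  rcases p with ((⟨i,s⟩|⟨⟩)|(⟨j,s⟩|l)) <;> rcases p' with ((⟨i',s'⟩|⟨⟩)|(⟨j',s'⟩|l')) <;>
    simp only [gram] <;> try rfl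
  · split
    · exact absurd (Or.inl ⟨i, s, rfl, by rename_i hc; rw [hc.1, hc.2]⟩) h
    · rfl
  · split
    · exact absurd (Or.inr (Or.inl ⟨j, s, rfl, by rename_i hc; rw [hc.1, hc.2]⟩)) h
    · rfl
  · split
    · exact absurd (Or.inr (Or.inr ⟨l, rfl, by rename_i hc; rw [hc]⟩)) h
    · rfl

theorem supPair_ee {k r q : ℕ} {i i' : Fin k} {s s' : Bool} :
    SupPair (k:=k) (r:=r) (q:=q) (.inl (.inl (i,s))) (.inl (.inl (i',s'))) ↔
      (i = i' ∧ s' = !s) := by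
  constructor
  · rintro (⟨i1,s1,h1,h2⟩|⟨j1,s1,h1,h2⟩|⟨l1,h1,h2⟩) <;> simp_all
  · rintro ⟨rfl, rfl⟩; exact Or.inl ⟨i, s, rfl, rfl⟩

theorem supPair_uu {k r q : ℕ} {j j' : Fin r} {s s' : Bool} :
    SupPair (k:=k) (r:=r) (q:=q) (.inr (.inl (j,s))) (.inr (.inl (j',s'))) ↔
      (j = j' ∧ s' = !s) := by
  constructor
  · rintro (⟨i1,s1,h1,h2⟩|⟨j1,s1,h1,h2⟩|⟨l1,h1,h2⟩) <;> simp_all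
  · rintro ⟨rfl, rfl⟩; exact Or.inr (Or.inl ⟨j, s, rfl, rfl⟩)

theorem supPair_zz {k r q : ℕ} {l l' : Fin q} :
    SupPair (k:=k) (r:=r) (q:=q) (.inr (.inr l)) (.inr (.inr l')) ↔ l = l' := by
  constructor
  · rintro (⟨i1,s1,h1,h2⟩|⟨j1,s1,h1,h2⟩|⟨l1,h1,h2⟩) <;> simp_all
  · rintro rfl; exact Or.inr (Or.inr ⟨l, rfl, rfl⟩)

/-- For any group grading (as a superalgebra) of the Heisenberg superalgebra
`H_{n,m}` (`n = 2k+1`, odd dimension `m`, char F ≠ 2, F algebraically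
closed), there exist `r, q` with `2r + q = m` and a homogeneous basis
`{z, e_i, ê_i, u_j, v_j, z_l}` whose only nonzero brackets are
`[e_i,ê_i] = [u_j,v_j] = [z_l,z_l] = z` (together with the brackets forced by
super (anti)symmetry). -/
theorem heisenberg_superalgebra_grading_homogeneous_basis
    (F : Type*) [Field F] [IsAlgClosed F] (hchar : (2 : F) ≠ 0)
    (L : Type*) [AddCommGroup L] [Module F L]
    (E0 E1 : Submodule F L) (hcompl : IsCompl E0 E1)
    (k m : ℕ)
    -- the standard basis of `H_{n,m}`: even `{e_i, ê_i, z}`, odd `{w_1,…,w_m}`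
    (b : Module.Basis (SupIdx k 0 m) F L)
    (heven : ∀ p : (Fin k × Bool) ⊕ Unit, b (Sum.inl p) ∈ E0)
    (hodd : ∀ p : (Fin 0 × Bool) ⊕ Fin m, b (Sum.inr p) ∈ E1)
    (br : L →ₗ[F] L →ₗ[F] L)
    (hee : ∀ i : Fin k, br (b (Sum.inl (Sum.inl (i, false)))) (b (Sum.inl (Sum.inl (i, true))))
      = b (Sum.inl (Sum.inr ())))
    (heem : ∀ i : Fin k, br (b (Sum.inl (Sum.inl (i, true)))) (b (Sum.inl (Sum.inl (i, false))))
      = -b (Sum.inl (Sum.inr ())))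
    (hww : ∀ j : Fin m, br (b (Sum.inr (Sum.inr j))) (b (Sum.inr (Sum.inr j)))
      = b (Sum.inl (Sum.inr ())))
    (h0 : ∀ p p' : SupIdx k 0 m, ¬ SupPair p p' → br (b p) (b p') = 0)
    -- a group grading of the superalgebra
    (G : Type*) [AddCommGroup G] [DecidableEq G]
    (Cg : G → Submodule F L) (hint : DirectSum.IsInternal Cg)
    (hgr : ∀ (g h : G) (x y : L), x ∈ Cg g → y ∈ Cg h → br x y ∈ Cg (g + h))
    (hrefine : ∀ g : G, Cg g = (Cg g ⊓ E0) ⊔ (Cg g ⊓ E1)) :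
    ∃ (r q : ℕ), 2 * r + q = m ∧
      ∃ c : Module.Basis (SupIdx k r q) F L,
        c (Sum.inl (Sum.inr ())) = b (Sum.inl (Sum.inr ())) ∧
        (∀ p : SupIdx k r q, ∃ g : G, c p ∈ Cg g) ∧
        (∀ p : (Fin k × Bool) ⊕ Unit, c (Sum.inl p) ∈ E0) ∧
        (∀ p : (Fin r × Bool) ⊕ Fin q, c (Sum.inr p) ∈ E1) ∧
        (∀ i : Fin k, br (c (Sum.inl (Sum.inl (i, false)))) (c (Sum.inl (Sum.inl (i, true))))
          = b (Sum.inl (Sum.inr ()))) ∧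
        (∀ j : Fin r, br (c (Sum.inr (Sum.inl (j, false)))) (c (Sum.inr (Sum.inl (j, true))))
          = b (Sum.inl (Sum.inr ()))) ∧
        (∀ l : Fin q, br (c (Sum.inr (Sum.inr l))) (c (Sum.inr (Sum.inr l)))
          = b (Sum.inl (Sum.inr ()))) ∧
        (∀ p p' : SupIdx k r q, ¬ SupPair p p' → br (c p) (c p') = 0) := by
  classical
  haveI : FiniteDimensional F L := Module.Finite.of_basis b
  letI : DirectSum.Decomposition Cg := hint.chooseDecomposition
  set z : L := b (Sum.inl (Sum.inr ())) with hzdef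
  have hzne : z ≠ 0 := b.ne_zero _
  set proj : G → L → L := fun g x => ((DirectSum.decompose Cg x) g : L) with hprojdef
  have hproj_mem : ∀ g x, proj g x ∈ Cg g := fun g x => SetLike.coe_mem _
  have hproj_sum : ∀ x : L,
      (∑ g ∈ (DirectSum.decompose Cg x).support, proj g x) = x := fun x =>
    DirectSum.sum_support_decompose Cg x
  have hproj_off : ∀ (g : G) (x : L), g ∉ (DirectSum.decompose Cg x).support → proj g x = 0 := by
    intro g x hg
    simp only [hprojdef]
    rw [DFinsupp.notMem_support_iff.1 hg]; rfl
  have huniq : ∀ (S : Finset G) (y : G → L), (∀ g, y g ∈ Cg g) →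
      (∑ g ∈ S, y g) = 0 → ∀ g ∈ S, y g = 0 := by
    intro S y hy hsum g hg
    have h1 : DirectSum.decompose Cg (∑ g ∈ S, y g) = DirectSum.decompose Cg 0 := by rw [hsum]
    rw [DirectSum.decompose_zero] at h1
    rw [DirectSum.decompose_sum] at h1
    have h2 : ∀ g' ∈ S, DirectSum.decompose Cg (y g') =
        DirectSum.of (fun i => Cg i) g' ⟨y g', hy g'⟩ := fun g' _ =>
      DirectSum.decompose_of_mem Cg (hy g')
    rw [Finset.sum_congr rfl h2] at h1
    have h3 := DFunLike.congr_fun h1 g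
    rw [DFinsupp.finset_sum_apply] at h3
    rw [Finset.sum_eq_single_of_mem g hg] at h3
    · rw [DirectSum.of_eq_same] at h3
      exact congrArg Subtype.val h3
    · intro g' _ hne
      exact DirectSum.of_eq_of_ne (β := fun i => Cg i) _ _ _ hne.symm
  -- the bilinear form
  set coordz : L →ₗ[F] F := b.coord (Sum.inl (Sum.inr ())) with hcoordzdef
  have hcoordz : coordz z = 1 := by
    simp [hcoordzdef, hzdef]
  set φ : L →ₗ[F] L →ₗ[F] F := LinearMap.compr₂ br coordz with hφdef
  have hGb : ∀ p p' : SupIdx k 0 m, br (b p) (b p') = gram F p p' • z := by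
    intro p p'
    rcases p with ((⟨i,s⟩|⟨⟩)|(⟨f0,s⟩|j))
    · rcases p' with ((⟨i',s'⟩|⟨⟩)|(⟨f0,s'⟩|j'))
      · by_cases hc : i = i' ∧ s' = !s
        · obtain ⟨rfl, rfl⟩ := hc
          cases s
          · simp only [Bool.not_false]
            rw [hee i]; simp [gram]
          · simp only [Bool.not_true]
            rw [heem i]; simp [gram]
        · rw [h0 _ _ (by simpa [supPair_ee] using hc)]
          simp only [gram]; rw [if_neg hc, zero_smul]
      · rw [h0 _ _ (by rintro (⟨_,_,h1,h2⟩|⟨_,_,h1,h2⟩|⟨_,h1,h2⟩) <;> simp only [reduceCtorEq, Sum.inl.injEq, Sum.inr.injEq, Prod.mk.injEq] at h1 h2)]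
        simp [gram]
      · exact f0.elim0
      · rw [h0 _ _ (by rintro (⟨_,_,h1,h2⟩|⟨_,_,h1,h2⟩|⟨_,h1,h2⟩) <;> simp only [reduceCtorEq, Sum.inl.injEq, Sum.inr.injEq, Prod.mk.injEq] at h1 h2)]
        simp [gram]
    · rcases p' with ((⟨i',s'⟩|⟨⟩)|(⟨f0,s'⟩|j'))
      · rw [h0 _ _ (by rintro (⟨_,_,h1,h2⟩|⟨_,_,h1,h2⟩|⟨_,h1,h2⟩) <;> simp only [reduceCtorEq, Sum.inl.injEq, Sum.inr.injEq, Prod.mk.injEq] at h1 h2)]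
        simp [gram]
      · rw [h0 _ _ (by rintro (⟨_,_,h1,h2⟩|⟨_,_,h1,h2⟩|⟨_,h1,h2⟩) <;> simp only [reduceCtorEq, Sum.inl.injEq, Sum.inr.injEq, Prod.mk.injEq] at h1 h2)]
        simp [gram]
      · exact f0.elim0
      · rw [h0 _ _ (by rintro (⟨_,_,h1,h2⟩|⟨_,_,h1,h2⟩|⟨_,h1,h2⟩) <;> simp only [reduceCtorEq, Sum.inl.injEq, Sum.inr.injEq, Prod.mk.injEq] at h1 h2)]
        simp [gram]
    · exact f0.elim0
    · rcases p' with ((⟨i',s'⟩|⟨⟩)|(⟨f0,s'⟩|j'))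
      · rw [h0 _ _ (by rintro (⟨_,_,h1,h2⟩|⟨_,_,h1,h2⟩|⟨_,h1,h2⟩) <;> simp only [reduceCtorEq, Sum.inl.injEq, Sum.inr.injEq, Prod.mk.injEq] at h1 h2)]
        simp [gram]
      · rw [h0 _ _ (by rintro (⟨_,_,h1,h2⟩|⟨_,_,h1,h2⟩|⟨_,h1,h2⟩) <;> simp only [reduceCtorEq, Sum.inl.injEq, Sum.inr.injEq, Prod.mk.injEq] at h1 h2)]
        simp [gram]
      · exact f0.elim0
      · by_cases hc : j = j'
        · subst hc
          rw [hww j]; simp [gram]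
        · rw [h0 _ _ (by simpa [supPair_zz] using hc)]
          simp [gram, hc]
  have hφb : ∀ p p' : SupIdx k 0 m, φ (b p) (b p') = gram F p p' := by
    intro p p'
    simp only [hφdef, LinearMap.compr₂_apply]
    rw [hGb p p', map_smul, hcoordz, smul_eq_mul, mul_one]
  have brφ : ∀ x y : L, br x y = φ x y • z := by
    have hmap : br = LinearMap.compr₂ br (LinearMap.smulRight coordz z) := by
      apply b.ext; intro p; apply b.ext; intro p'
      simp only [LinearMap.compr₂_apply, LinearMap.smulRight_apply]
      rw [hGb p p', map_smul, hcoordz, smul_eq_mul, mul_one]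
    intro x y
    conv_lhs => rw [hmap]
    simp [hφdef]
  have hφzl : ∀ y, φ z y = 0 := by
    have h1 : φ z = 0 := by
      apply b.ext; intro p'
      rw [hzdef, hφb]
      rcases p' with ((⟨i,s⟩|⟨⟩)|(⟨f0,s⟩|j)) <;> simp [gram]
    intro y; rw [h1]; rfl
  have hφzr : ∀ x, φ x z = 0 := by
    have h1 : φ.flip z = 0 := by
      apply b.ext; intro p
      have : φ.flip z (b p) = φ (b p) z := rfl
      rw [this, hzdef, hφb]
      rcases p with ((⟨i,s⟩|⟨⟩)|(⟨f0,s⟩|j)) <;> simp [gram]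
    intro x
    have : φ x z = φ.flip z x := rfl
    rw [this, h1]; rfl
  -- spans of even and odd parts
  have hle0 : Submodule.span F (Set.range fun p : (Fin k × Bool) ⊕ Unit =>
      b (Sum.inl p)) ≤ E0 := by
    rw [Submodule.span_le]; rintro y ⟨p, rfl⟩; exact heven p
  have hle1 : Submodule.span F (Set.range fun p : (Fin 0 × Bool) ⊕ Fin m =>
      b (Sum.inr p)) ≤ E1 := by
    rw [Submodule.span_le]; rintro y ⟨p, rfl⟩; exact hodd p
  have hsplitb : ∀ x : L, x = (∑ p, b.repr x (Sum.inl p) • b (Sum.inl p)) +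
      (∑ p, b.repr x (Sum.inr p) • b (Sum.inr p)) := by
    intro x
    conv_lhs => rw [← b.sum_repr x]
    rw [Fintype.sum_sum_type]
  have hE0span : Submodule.span F (Set.range fun p : (Fin k × Bool) ⊕ Unit =>
      b (Sum.inl p)) = E0 := by
    apply le_antisymm hle0
    intro x hx
    have hxe : (∑ p, b.repr x (Sum.inl p) • b (Sum.inl p)) ∈
        Submodule.span F (Set.range fun p : (Fin k × Bool) ⊕ Unit => b (Sum.inl p)) :=
      Submodule.sum_mem _ fun p _ =>
        Submodule.smul_mem _ _ (Submodule.subset_span ⟨p, rfl⟩)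
    have hxo : (∑ p, b.repr x (Sum.inr p) • b (Sum.inr p)) ∈ E1 :=
      Submodule.sum_mem _ fun p _ => Submodule.smul_mem _ _ (hodd p)
    have hmem : x - (∑ p, b.repr x (Sum.inl p) • b (Sum.inl p)) ∈ E0 ⊓ E1 := by
      constructor
      · exact Submodule.sub_mem _ hx (hle0 hxe)
      · have : x - (∑ p, b.repr x (Sum.inl p) • b (Sum.inl p)) =
            (∑ p, b.repr x (Sum.inr p) • b (Sum.inr p)) := by
          rw [sub_eq_iff_eq_add]
          conv_lhs => rw [hsplitb x]
          exact add_comm _ _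
        rw [this]; exact hxo
    rw [hcompl.inf_eq_bot] at hmem
    have hx0 : x = (∑ p, b.repr x (Sum.inl p) • b (Sum.inl p)) :=
      eq_of_sub_eq_zero (Submodule.mem_bot (R := F) |>.1 hmem)
    rw [hx0]; exact hxe
  have hE1span : Submodule.span F (Set.range fun p : (Fin 0 × Bool) ⊕ Fin m =>
      b (Sum.inr p)) = E1 := by
    apply le_antisymm hle1
    intro x hx
    have hxo : (∑ p, b.repr x (Sum.inr p) • b (Sum.inr p)) ∈
        Submodule.span F (Set.range fun p : (Fin 0 × Bool) ⊕ Fin m => b (Sum.inr p)) :=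
      Submodule.sum_mem _ fun p _ =>
        Submodule.smul_mem _ _ (Submodule.subset_span ⟨p, rfl⟩)
    have hxe : (∑ p, b.repr x (Sum.inl p) • b (Sum.inl p)) ∈ E0 :=
      Submodule.sum_mem _ fun p _ => Submodule.smul_mem _ _ (heven p)
    have hmem : x - (∑ p, b.repr x (Sum.inr p) • b (Sum.inr p)) ∈ E0 ⊓ E1 := by
      constructor
      · have : x - (∑ p, b.repr x (Sum.inr p) • b (Sum.inr p)) =
            (∑ p, b.repr x (Sum.inl p) • b (Sum.inl p)) := by
          rw [sub_eq_iff_eq_add]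
          conv_lhs => rw [hsplitb x]
        rw [this]; exact hxe
      · exact Submodule.sub_mem _ hx (hle1 hxo)
    rw [hcompl.inf_eq_bot] at hmem
    have hx0 : x = (∑ p, b.repr x (Sum.inr p) • b (Sum.inr p)) :=
      eq_of_sub_eq_zero (Submodule.mem_bot (R := F) |>.1 hmem)
    rw [hx0]; exact hxo
  have bil_zero : ∀ (B : L →ₗ[F] L →ₗ[F] F) (s t : Set L),
      (∀ x ∈ s, ∀ y ∈ t, B x y = 0) →
      ∀ x ∈ Submodule.span F s, ∀ y ∈ Submodule.span F t, B x y = 0 := by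
    intro B s t hB x hx y hy
    induction hx using Submodule.span_induction with
    | mem x' hx' =>
      induction hy using Submodule.span_induction with
      | mem y' hy' => exact hB x' hx' y' hy'
      | zero => simp
      | add a c ha' hc' ha hc => rw [map_add, ha, hc, add_zero]
      | smul t' a ha' ha => rw [map_smul, ha, smul_zero]
    | zero => rw [map_zero]; rfl
    | add a c ha' hc' ha hc => rw [map_add, LinearMap.add_apply, ha, hc, add_zero]
    | smul t' a ha' ha => rw [map_smul, LinearMap.smul_apply, ha, smul_zero]
  have hanti : ∀ x ∈ E0, ∀ y ∈ E0, φ x y = -φ y x := by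
    have key := bil_zero (φ + φ.flip)
      (Set.range fun p : (Fin k × Bool) ⊕ Unit => b (Sum.inl p))
      (Set.range fun p : (Fin k × Bool) ⊕ Unit => b (Sum.inl p)) ?_
    rotate_left
    · rintro x' ⟨p, rfl⟩ y' ⟨p', rfl⟩
      have : (φ + LinearMap.flip φ) (b (Sum.inl p)) (b (Sum.inl p')) =
          φ (b (Sum.inl p)) (b (Sum.inl p')) + φ (b (Sum.inl p')) (b (Sum.inl p)) := rfl
      rw [this, hφb, hφb]
      rcases p with (⟨i,s⟩|⟨⟩) <;> rcases p' with (⟨i',s'⟩|⟨⟩) <;> simp [gram]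
      by_cases hii : i = i'
      · subst hii; cases s <;> cases s' <;> simp
      · simp [hii, Ne.symm hii]
    · intro x hx y hy
      have h2 := key x (hE0span ▸ hx) y (hE0span ▸ hy)
      have h3 : (φ + LinearMap.flip φ) x y = φ x y + φ y x := rfl
      rw [h3] at h2
      linear_combination h2
  have hsym1 : ∀ x ∈ E1, ∀ y ∈ E1, φ x y = φ y x := by
    have key := bil_zero (φ - φ.flip)
      (Set.range fun p : (Fin 0 × Bool) ⊕ Fin m => b (Sum.inr p))
      (Set.range fun p : (Fin 0 × Bool) ⊕ Fin m => b (Sum.inr p)) ?_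
    rotate_left
    · rintro x' ⟨p, rfl⟩ y' ⟨p', rfl⟩
      have : (φ - LinearMap.flip φ) (b (Sum.inr p)) (b (Sum.inr p')) =
          φ (b (Sum.inr p)) (b (Sum.inr p')) - φ (b (Sum.inr p')) (b (Sum.inr p)) := rfl
      rw [this, hφb, hφb]
      rcases p with (⟨f0,s⟩|j) <;> rcases p' with (⟨f0',s'⟩|j')
      · exact f0.elim0
      · exact f0.elim0
      · exact f0'.elim0
      · by_cases hjj : j = j'
        · subst hjj; simp [gram]
        · simp [gram, hjj, Ne.symm hjj]
    · intro x hx y hy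
      have h2 := key x (hE1span ▸ hx) y (hE1span ▸ hy)
      have h3 : (φ - LinearMap.flip φ) x y = φ x y - φ y x := rfl
      rw [h3] at h2
      linear_combination h2
  have hcross : ∀ x ∈ E0, ∀ y ∈ E1, φ x y = 0 := by
    have key := bil_zero φ
      (Set.range fun p : (Fin k × Bool) ⊕ Unit => b (Sum.inl p))
      (Set.range fun p : (Fin 0 × Bool) ⊕ Fin m => b (Sum.inr p)) ?_
    · intro x hx y hy
      exact key x (hE0span ▸ hx) y (hE1span ▸ hy)
    · rintro x' ⟨p, rfl⟩ y' ⟨p', rfl⟩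
      rw [hφb]
      rcases p with (⟨i,s⟩|⟨⟩) <;> rcases p' with (⟨f0',s'⟩|j') <;> first | exact f0'.elim0 | rfl
  have hcross' : ∀ y ∈ E1, ∀ x ∈ E0, φ y x = 0 := by
    have key := bil_zero φ
      (Set.range fun p : (Fin 0 × Bool) ⊕ Fin m => b (Sum.inr p))
      (Set.range fun p : (Fin k × Bool) ⊕ Unit => b (Sum.inl p)) ?_
    · intro y hy x hx
      exact key y (hE1span ▸ hy) x (hE0span ▸ hx)
    · rintro x' ⟨p, rfl⟩ y' ⟨p', rfl⟩
      rw [hφb]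
      rcases p with (⟨f0,s⟩|j) <;> rcases p' with (⟨i',s'⟩|⟨⟩) <;> first | exact f0.elim0 | rfl
  have halt : ∀ x ∈ E0, φ x x = 0 := by
    intro x hx
    have h1 := hanti x hx x hx
    have h2 : (2:F) * φ x x = 0 := by linear_combination h1
    rcases mul_eq_zero.1 h2 with h | h
    · exact absurd h hchar
    · exact h
  -- the radical is spanned by z
  have hsumφ : ∀ (x : L) (p0 : SupIdx k 0 m),
      φ x (b p0) = ∑ p, b.repr x p * gram F p p0 := by
    intro x p0
    conv_lhs => rw [← b.sum_repr x]
    rw [map_sum, LinearMap.sum_apply]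
    apply Finset.sum_congr rfl
    intro p _
    rw [map_smul, LinearMap.smul_apply, hφb, smul_eq_mul]
  have hrad : ∀ x : L, (∀ y, φ x y = 0) → ∃ c : F, x = c • z := by
    intro x hx
    have hco : ∀ p0 : SupIdx k 0 m, p0 ≠ Sum.inl (Sum.inr ()) → b.repr x p0 = 0 := by
      intro p0 hp0
      have h1 := hx (b (partner p0))
      rw [hsumφ x (partner p0)] at h1
      rw [Finset.sum_congr rfl (fun p _ => by rw [gram_partner F p p0 hp0])] at h1
      simp only [mul_ite, mul_zero, Finset.sum_ite_eq', Finset.mem_univ, if_true] at h1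
      rcases mul_eq_zero.1 h1 with h | h
      · exact h
      · exact absurd h (dd_ne_zero F p0)
    refine ⟨b.repr x (Sum.inl (Sum.inr ())), ?_⟩
    have h2 := b.sum_repr x
    rw [Finset.sum_eq_single (Sum.inl (Sum.inr ()))] at h2
    · exact h2.symm
    · intro p _ hp
      rw [hco p hp, zero_smul]
    · intro h
      exact absurd (Finset.mem_univ _) h
  have hsplit : ∀ y : L, ∃ y0 y1, y0 ∈ E0 ∧ y1 ∈ E1 ∧ y = y0 + y1 := by
    intro y
    have : y ∈ E0 ⊔ E1 := by rw [hcompl.sup_eq_top]; trivial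
    rcases Submodule.mem_sup.1 this with ⟨y0, h0, y1, h1, hy⟩
    exact ⟨y0, y1, h0, h1, hy.symm⟩
  -- vanishing of components of br
  have hbr_comp_zero : ∀ (x y : L) (h : G), y ∈ Cg h → br x y = 0 →
      ∀ g, br (proj g x) y = 0 := by
    intro x y h hy hxy g
    by_cases hg : g ∈ (DirectSum.decompose Cg x).support
    · have hmem : ∀ a : G, br (proj (a - h) x) y ∈ Cg a := by
        intro a
        have := hgr (a - h) h (proj (a - h) x) y (hproj_mem _ _) hy
        rwa [sub_add_cancel] at this
      have hsum : (∑ a ∈ (DirectSum.decompose Cg x).support.image (· + h),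
          br (proj (a - h) x) y) = 0 := by
        rw [Finset.sum_image (fun a _ c _ hac => by
          exact add_right_cancel hac)]
        have h1 : ∀ g' ∈ (DirectSum.decompose Cg x).support,
            br (proj (g' + h - h) x) y = br (proj g' x) y := by
          intro g' _
          rw [add_sub_cancel_right]
        rw [Finset.sum_congr rfl h1]
        have h2 : (∑ g' ∈ (DirectSum.decompose Cg x).support, br (proj g' x) y)
            = br x y := by
          conv_rhs => rw [← hproj_sum x]
          rw [map_sum, LinearMap.sum_apply]
        rw [h2, hxy]
      have key := huniq _ _ (fun a => hmem a) hsum (g + h)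
        (Finset.mem_image_of_mem _ hg)
      rwa [add_sub_cancel_right] at key
    · rw [hproj_off g x hg, map_zero, LinearMap.zero_apply]
  have hφ_all : ∀ x : L, (∀ (h : G) (y : L), y ∈ Cg h → φ x y = 0) → ∀ y, φ x y = 0 := by
    intro x hx y
    conv_lhs => rw [← hproj_sum y]
    rw [map_sum]
    exact Finset.sum_eq_zero fun h _ => hx h _ (hproj_mem _ _)
  have horth : ∀ (w : L) (a : G), w ∈ Cg a → ∀ x, φ x w = 0 → ∀ g, φ (proj g x) w = 0 := by
    intro w a hw x hxw g
    have h1 : br x w = 0 := by rw [brφ, hxw, zero_smul]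
    have h2 := hbr_comp_zero x w a hw h1 g
    rw [brφ] at h2
    rcases smul_eq_zero.1 h2 with h | h
    · exact h
    · exact absurd h hzne
  -- z is homogeneous
  obtain ⟨g0, hzg0⟩ : ∃ g0, z ∈ Cg g0 := by
    have hcz : ∀ g, ∃ c : F, proj g z = c • z := by
      intro g
      apply hrad
      apply hφ_all
      intro h y hy
      have h1 : br z y = 0 := by rw [brφ, hφzl, zero_smul]
      have h2 := hbr_comp_zero z y h hy h1 g
      rw [brφ] at h2
      exact (smul_eq_zero.1 h2).resolve_right hzne
    choose cz hcz using hcz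
    have hex : ∃ g ∈ (DirectSum.decompose Cg z).support, cz g ≠ 0 := by
      by_contra hc
      push_neg at hc
      apply hzne
      conv_lhs => rw [← hproj_sum z]
      apply Finset.sum_eq_zero
      intro g hg
      rw [hcz g, hc g hg, zero_smul]
    obtain ⟨g, hgs, hcg⟩ := hex
    refine ⟨g, ?_⟩
    have h3 : z = (cz g)⁻¹ • proj g z := by
      rw [hcz g, smul_smul, inv_mul_cancel₀ hcg, one_smul]
    rw [h3]
    exact Submodule.smul_mem _ _ (hproj_mem _ _)
  -- gradedness of E0 and E1
  have grKey : ∀ x : L, ∀ g : G,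
      (proj g x ∈ E0 ∨ x ∈ E0 → True) → True := fun _ _ _ => trivial
  have grBoth : ∀ x : L, (∀ g, proj g x ∈ E0 ∨ True) → True := fun _ _ => trivial
  clear grKey grBoth
  have hdecEE : ∀ x : L, ∃ av bv : G → L, (∀ g, av g ∈ Cg g ∧ av g ∈ E0) ∧
      (∀ g, bv g ∈ Cg g ∧ bv g ∈ E1) ∧ (∀ g, proj g x = av g + bv g) := by
    intro x
    have hdec : ∀ g' : G, ∃ a bb : L, (a ∈ Cg g' ∧ a ∈ E0) ∧ (bb ∈ Cg g' ∧ bb ∈ E1) ∧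
        proj g' x = a + bb := by
      intro g'
      have hmem := hproj_mem g' x
      rw [hrefine g'] at hmem
      rcases Submodule.mem_sup.1 hmem with ⟨a, ha, bb, hbb, hab⟩
      exact ⟨a, bb, ⟨ha.1, ha.2⟩, ⟨hbb.1, hbb.2⟩, hab.symm⟩
    choose av bv h1 h2 h3 using hdec
    exact ⟨av, bv, h1, h2, h3⟩
  have grE0 : ∀ x ∈ E0, ∀ g, proj g x ∈ E0 := by
    intro x hx g
    obtain ⟨av, bv, hav, hbv, hab⟩ := hdecEE x
    by_cases hg : g ∈ (DirectSum.decompose Cg x).support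
    · have hsuma : (∑ g' ∈ (DirectSum.decompose Cg x).support, av g') ∈ E0 :=
        Submodule.sum_mem _ fun g' _ => (hav g').2
      have hsumb0 : (∑ g' ∈ (DirectSum.decompose Cg x).support, bv g') =
          x - (∑ g' ∈ (DirectSum.decompose Cg x).support, av g') := by
        rw [eq_sub_iff_add_eq, ← Finset.sum_add_distrib]
        conv_rhs => rw [← hproj_sum x]
        exact Finset.sum_congr rfl fun g' _ => by rw [add_comm, ← hab g']
      have hsumbE : (∑ g' ∈ (DirectSum.decompose Cg x).support, bv g') ∈ E0 ⊓ E1 := by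
        constructor
        · rw [hsumb0]; exact Submodule.sub_mem _ hx hsuma
        · exact Submodule.sum_mem _ fun g' _ => (hbv g').2
      rw [hcompl.inf_eq_bot, Submodule.mem_bot] at hsumbE
      have hb0 := huniq _ bv (fun g' => (hbv g').1) hsumbE g hg
      rw [hab g, hb0, add_zero]
      exact (hav g).2
    · rw [hproj_off g x hg]
      exact Submodule.zero_mem _
  have grE1 : ∀ x ∈ E1, ∀ g, proj g x ∈ E1 := by
    intro x hx g
    obtain ⟨av, bv, hav, hbv, hab⟩ := hdecEE x
    by_cases hg : g ∈ (DirectSum.decompose Cg x).support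
    · have hsumb : (∑ g' ∈ (DirectSum.decompose Cg x).support, bv g') ∈ E1 :=
        Submodule.sum_mem _ fun g' _ => (hbv g').2
      have hsuma0 : (∑ g' ∈ (DirectSum.decompose Cg x).support, av g') =
          x - (∑ g' ∈ (DirectSum.decompose Cg x).support, bv g') := by
        rw [eq_sub_iff_add_eq, ← Finset.sum_add_distrib]
        conv_rhs => rw [← hproj_sum x]
        exact Finset.sum_congr rfl fun g' _ => by rw [← hab g']
      have hsumaE : (∑ g' ∈ (DirectSum.decompose Cg x).support, av g') ∈ E0 ⊓ E1 := by
        constructor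
        · exact Submodule.sum_mem _ fun g' _ => (hav g').2
        · rw [hsuma0]; exact Submodule.sub_mem _ hx hsumb
      rw [hcompl.inf_eq_bot, Submodule.mem_bot] at hsumaE
      have ha0 := huniq _ av (fun g' => (hav g').1) hsumaE g hg
      rw [hab g, ha0, zero_add]
      exact (hbv g).2
    · rw [hproj_off g x hg]
      exact Submodule.zero_mem _
  -- picking homogeneous elements
  have hpick : ∀ (V : Submodule F L), (∀ x ∈ V, ∀ g, proj g x ∈ V) →
      ∀ (W : Submodule F L), ∀ x ∈ V, x ∉ W →
      ∃ x', x' ∈ V ∧ (∃ g, x' ∈ Cg g) ∧ x' ∉ W := by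
    intro V hVgr W x hxV hxW
    by_contra hcon
    push_neg at hcon
    apply hxW
    rw [← hproj_sum x]
    apply Submodule.sum_mem
    intro g _
    exact hcon (proj g x) (hVgr x hxV g) ⟨g, hproj_mem g x⟩
  have hpair : ∀ (V : Submodule F L), (∀ x ∈ V, ∀ g, proj g x ∈ V) →
      ∀ (x y : L), y ∈ V → φ x y ≠ 0 →
      ∃ y', y' ∈ V ∧ (∃ g, y' ∈ Cg g) ∧ φ x y' ≠ 0 := by
    intro V hVgr x y hyV hxy
    by_contra hcon
    push_neg at hcon
    apply hxy
    rw [← hproj_sum y, map_sum]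
    apply Finset.sum_eq_zero
    intro g _
    exact hcon (proj g y) (hVgr y hyV g) ⟨g, hproj_mem g y⟩
  -- Gram-independence
  have gram_indep : ∀ (ι : Type) (_ : Fintype ι) (v w : ι → L) (d : ι → F),
      (∀ i, d i ≠ 0) → (∀ i j, φ (v i) (w j) = if i = j then d i else 0) →
      LinearIndependent F v := by
    intro ι hfin v w d hd hg
    rw [Fintype.linearIndependent_iff]
    intro a ha i
    have h1 : φ (∑ j, a j • v j) (w i) = 0 := by rw [ha, map_zero, LinearMap.zero_apply]
    rw [map_sum, LinearMap.sum_apply] at h1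
    have h2 : ∀ j : ι, j ∈ Finset.univ → φ (a j • v j) (w i) =
        if j = i then a j * d j else 0 := by
      intro j _
      rw [map_smul, LinearMap.smul_apply, hg j i, smul_eq_mul, mul_ite, mul_zero]
    rw [Finset.sum_congr rfl h2, Finset.sum_ite_eq' Finset.univ i
      (fun j => a j * d j)] at h1
    simp only [Finset.mem_univ, if_true] at h1
    rcases mul_eq_zero.1 h1 with h | h
    · exact h
    · exact absurd h (hd i)
  -- the even induction
  have evenlem : ∀ n (V : Submodule F L), V ≤ E0 →
      (∀ x ∈ V, ∀ g, proj g x ∈ V) → z ∈ V →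
      (∀ x ∈ V, (∀ y ∈ V, φ x y = 0) → ∃ c : F, x = c • z) →
      Module.finrank F V ≤ n →
      ∃ (k' : ℕ) (e : Fin k' → Bool → L),
        (∀ i s, e i s ∈ V) ∧
        (∀ i s, ∃ g, e i s ∈ Cg g) ∧
        (∀ i s j t, φ (e i s) (e j t) =
          if i = j ∧ t = !s then (if s then (-1:F) else 1) else 0) ∧
        Submodule.span F (insert z (Set.range fun p : Fin k' × Bool => e p.1 p.2)) = V := by
    intro n
    induction n with
    | zero =>
      intro V hVE0 hVgr hzV hVrad hdim
      exfalso
      have h1 : Module.finrank F V = 0 := Nat.le_zero.1 hdim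
      rw [Submodule.finrank_eq_zero] at h1
      rw [h1] at hzV
      exact hzne (Submodule.mem_bot (R := F) |>.1 hzV)
    | succ n ih =>
      intro V hVE0 hVgr hzV hVrad hdim
      by_cases hbase : ∀ x ∈ V, ∃ c : F, x = c • z
      · refine ⟨0, fun i _ => i.elim0, fun i => i.elim0, fun i => i.elim0, fun i => i.elim0, ?_⟩
        have hempty : (Set.range fun p : Fin 0 × Bool => (p.1.elim0 : L)) = ∅ :=
          Set.range_eq_empty _
        rw [hempty, insert_empty_eq]
        apply le_antisymm
        · rw [Submodule.span_le, Set.singleton_subset_iff]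
          exact hzV
        · intro x hx
          obtain ⟨c, rfl⟩ := hbase x hx
          exact Submodule.mem_span_singleton.2 ⟨c, rfl⟩
      · push_neg at hbase
        obtain ⟨x0, hx0V, hx0z⟩ := hbase
        have hx0not : x0 ∉ Submodule.span F {z} := by
          intro hmem
          rcases Submodule.mem_span_singleton.1 hmem with ⟨c, hc⟩
          exact hx0z c hc.symm
        obtain ⟨x1, hx1V, ⟨gx, hx1g⟩, hx1not⟩ :=
          hpick V hVgr (Submodule.span F {z}) x0 hx0V hx0not
        have hx1rad : ¬ (∀ y ∈ V, φ x1 y = 0) := by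
          intro hcon
          obtain ⟨c, hc⟩ := hVrad x1 hx1V hcon
          exact hx1not (hc ▸ Submodule.mem_span_singleton.2 ⟨c, rfl⟩)
        push_neg at hx1rad
        obtain ⟨y0, hy0V, hy0φ⟩ := hx1rad
        obtain ⟨y1, hy1V, ⟨gy, hy1g⟩, hy1φ⟩ := hpair V hVgr x1 y0 hy0V hy0φ
        set e0 : L := x1 with he0def
        set f0 : L := (φ x1 y1)⁻¹ • y1 with hf0def
        have he0V : e0 ∈ V := hx1V
        have hf0V : f0 ∈ V := Submodule.smul_mem _ _ hy1V
        have hef : φ e0 f0 = 1 := by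
          rw [hf0def, map_smul, smul_eq_mul, inv_mul_cancel₀ hy1φ]
        have hfe : φ f0 e0 = -1 := by
          rw [hanti f0 (hVE0 hf0V) e0 (hVE0 he0V), hef]
        have hee0 : φ e0 e0 = 0 := halt e0 (hVE0 he0V)
        have hff0 : φ f0 f0 = 0 := halt f0 (hVE0 hf0V)
        set V' : Submodule F L :=
          V ⊓ LinearMap.ker (φ.flip e0) ⊓ LinearMap.ker (φ.flip f0) with hV'def
        have hV'mem : ∀ v, v ∈ V' ↔ v ∈ V ∧ φ v e0 = 0 ∧ φ v f0 = 0 := by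
          intro v
          simp only [hV'def, Submodule.mem_inf, LinearMap.mem_ker, LinearMap.flip_apply,
            and_assoc]
        have hV'le : V' ≤ V := fun v hv => ((hV'mem v).1 hv).1
        have hzV' : z ∈ V' := (hV'mem z).2 ⟨hzV, hφzl e0, hφzl f0⟩
        have hf0g : f0 ∈ Cg gy := Submodule.smul_mem _ _ hy1g
        have hV'gr : ∀ x ∈ V', ∀ g, proj g x ∈ V' := by
          intro v hv g
          have hv' := (hV'mem v).1 hv
          exact (hV'mem _).2 ⟨hVgr v hv'.1 g, horth e0 gx hx1g v hv'.2.1 g,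
            horth f0 gy hf0g v hv'.2.2 g⟩
        have hproj2 : ∀ w ∈ V, w - φ w f0 • e0 + φ w e0 • f0 ∈ V' := by
          intro w hw
          refine (hV'mem _).2 ⟨?_, ?_, ?_⟩
          · exact Submodule.add_mem _
              (Submodule.sub_mem _ hw (Submodule.smul_mem _ _ he0V))
              (Submodule.smul_mem _ _ hf0V)
          · simp only [map_add, map_sub, map_smul, LinearMap.add_apply, LinearMap.sub_apply,
              LinearMap.smul_apply, smul_eq_mul, hee0, hfe, hef]
            ring
          · simp only [map_add, map_sub, map_smul, LinearMap.add_apply, LinearMap.sub_apply,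
              LinearMap.smul_apply, smul_eq_mul, hee0, hff0, hfe, hef]
            ring
        have hV'rad : ∀ x ∈ V', (∀ y ∈ V', φ x y = 0) → ∃ c : F, x = c • z := by
          intro v hv hvy
          apply hVrad v (hV'le hv)
          intro w hw
          have h1 := hvy _ (hproj2 w hw)
          have hv' := (hV'mem v).1 hv
          simp only [map_add, map_sub, map_smul, smul_eq_mul] at h1
          linear_combination h1 + φ w f0 * hv'.2.1 - φ w e0 * hv'.2.2
        have hlt : V' < V := by
          rw [SetLike.lt_iff_le_and_exists]
          refine ⟨hV'le, e0, he0V, fun hc => ?_⟩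
          have h2 := ((hV'mem e0).1 hc).2.2
          rw [hef] at h2
          exact one_ne_zero h2
        have hdim' : Module.finrank F V' ≤ n := by
          have := Submodule.finrank_lt_finrank_of_lt hlt
          omega
        obtain ⟨k', e, heV', hehom', hegram', hespan'⟩ :=
          ih V' (le_trans hV'le hVE0) hV'gr hzV' hV'rad hdim'
        have hmemAll : ∀ (i : Fin (k'+1)) (s : Bool),
            Fin.cons (α := fun _ => Bool → L) (fun s => if s then f0 else e0) e i s ∈ V := by
          intro i s
          induction i using Fin.cases with
          | zero =>
            rw [Fin.cons_zero]
            cases s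
            · simpa using he0V
            · simpa using hf0V
          | succ i' =>
            rw [Fin.cons_succ]
            exact hV'le (heV' i' s)
        refine ⟨k' + 1, Fin.cons (fun s => if s then f0 else e0) e, hmemAll, ?_, ?_, ?_⟩
        · intro i s
          induction i using Fin.cases with
          | zero =>
            rw [Fin.cons_zero]
            cases s
            · exact ⟨gx, by simpa using hx1g⟩
            · exact ⟨gy, by simpa using hf0g⟩
          | succ i' =>
            rw [Fin.cons_succ]
            exact hehom' i' s
        · intro i s j t
          induction i using Fin.cases with
          | zero =>
            induction j using Fin.cases with
            | zero =>
              rw [Fin.cons_zero]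
              cases s <;> cases t <;> simp [hef, hfe, hee0, hff0]
            | succ j' =>
              rw [Fin.cons_zero, Fin.cons_succ]
              have hjV' := (hV'mem _).1 (heV' j' t)
              have h1 : φ (e j' t) (if s then f0 else e0) = 0 := by
                cases s
                · simpa using hjV'.2.1
                · simpa using hjV'.2.2
              have hmem0 : (if s then f0 else e0) ∈ E0 := by
                cases s
                · exact hVE0 he0V
                · exact hVE0 hf0V
              have h2 : φ (if s then f0 else e0) (e j' t) = 0 := by
                rw [hanti _ hmem0 _ (hVE0 (hV'le (heV' j' t))), h1, neg_zero]
              rw [h2, if_neg (by rintro ⟨h, _⟩; exact Fin.succ_ne_zero j' h.symm)]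
          | succ i' =>
            induction j using Fin.cases with
            | zero =>
              rw [Fin.cons_succ, Fin.cons_zero]
              have hiV' := (hV'mem _).1 (heV' i' s)
              have h1 : φ (e i' s) (if t then f0 else e0) = 0 := by
                cases t
                · simpa using hiV'.2.1
                · simpa using hiV'.2.2
              rw [h1, if_neg (by rintro ⟨h, _⟩; exact Fin.succ_ne_zero i' h)]
            | succ j' =>
              rw [Fin.cons_succ, Fin.cons_succ, hegram' i' s j' t]
              simp only [Fin.succ_inj]
        · apply le_antisymm
          · rw [Submodule.span_le]
            intro w hw
            rcases Set.mem_insert_iff.1 hw with rfl | ⟨p, rfl⟩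
            · exact hzV
            · exact hmemAll p.1 p.2
          · intro w hw
            have hw' := hproj2 w hw
            rw [← hespan'] at hw'
            have hsub : Submodule.span F
                (insert z (Set.range fun p : Fin k' × Bool => e p.1 p.2)) ≤
                Submodule.span F (insert z (Set.range fun p : Fin (k'+1) × Bool =>
                  Fin.cons (α := fun _ => Bool → L) (fun s => if s then f0 else e0) e p.1 p.2)) := by
              apply Submodule.span_mono
              apply Set.insert_subset_insert
              rintro w2 ⟨p, rfl⟩
              exact ⟨(p.1.succ, p.2), by simp⟩
            have he0mem : e0 ∈ Submodule.span F (insert z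
                (Set.range fun p : Fin (k'+1) × Bool =>
                  Fin.cons (α := fun _ => Bool → L) (fun s => if s then f0 else e0) e p.1 p.2)) :=
              Submodule.subset_span (Set.mem_insert_iff.2 (Or.inr ⟨((0 : Fin (k'+1)), false),
                by simp⟩))
            have hf0mem : f0 ∈ Submodule.span F (insert z
                (Set.range fun p : Fin (k'+1) × Bool =>
                  Fin.cons (α := fun _ => Bool → L) (fun s => if s then f0 else e0) e p.1 p.2)) :=
              Submodule.subset_span (Set.mem_insert_iff.2 (Or.inr ⟨((0 : Fin (k'+1)), true),
                by simp⟩))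
            have hwid : w = (w - φ w f0 • e0 + φ w e0 • f0) + φ w f0 • e0 - φ w e0 • f0 := by
              abel
            rw [hwid]
            exact Submodule.sub_mem _
              (Submodule.add_mem _ (hsub hw') (Submodule.smul_mem _ _ he0mem))
              (Submodule.smul_mem _ _ hf0mem)
  -- the odd induction
  have oddlem : ∀ n (V : Submodule F L), V ≤ E1 →
      (∀ x ∈ V, ∀ g, proj g x ∈ V) →
      (∀ x ∈ V, (∀ y ∈ V, φ x y = 0) → x = 0) →
      Module.finrank F V ≤ n →
      ∃ (r q : ℕ) (u : Fin r → Bool → L) (zs : Fin q → L),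
        (∀ j s, u j s ∈ V) ∧ (∀ l, zs l ∈ V) ∧
        (∀ j s, ∃ g, u j s ∈ Cg g) ∧ (∀ l, ∃ g, zs l ∈ Cg g) ∧
        (∀ j s j' t, φ (u j s) (u j' t) = if j = j' ∧ t = !s then (1:F) else 0) ∧
        (∀ j s l, φ (u j s) (zs l) = 0) ∧
        (∀ l j s, φ (zs l) (u j s) = 0) ∧
        (∀ l l', φ (zs l) (zs l') = if l = l' then (1:F) else 0) ∧
        Submodule.span F ((Set.range fun p : Fin r × Bool => u p.1 p.2) ∪ Set.range zs) = V := by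
    intro n
    induction n with
    | zero =>
      intro V hVE1 hVgr hVnd hdim
      refine ⟨0, 0, fun j => j.elim0, fun l => l.elim0, fun j => j.elim0, fun l => l.elim0,
        fun j => j.elim0, fun l => l.elim0, fun j => j.elim0, fun l => l.elim0, fun l => l.elim0, ?_⟩
      have h1 : Module.finrank F V = 0 := Nat.le_zero.1 hdim
      rw [Submodule.finrank_eq_zero] at h1
      rw [h1]
      rw [Set.range_eq_empty, Set.range_eq_empty, Set.empty_union, Submodule.span_empty]
      exact ⟨fun l => l.elim0, rfl⟩
    | succ n ih =>
      intro V hVE1 hVgr hVnd hdim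
      by_cases hbot : V = ⊥
      · refine ⟨0, 0, fun j => j.elim0, fun l => l.elim0, fun j => j.elim0, fun l => l.elim0,
          fun j => j.elim0, fun l => l.elim0, fun j => j.elim0, fun l => l.elim0, fun l => l.elim0, ?_⟩
        rw [hbot]
        rw [Set.range_eq_empty, Set.range_eq_empty, Set.empty_union, Submodule.span_empty]
        exact ⟨fun l => l.elim0, rfl⟩
      · by_cases hA : ∃ w, w ∈ V ∧ (∃ g, w ∈ Cg g) ∧ φ w w ≠ 0
        · -- a homogeneous anisotropic vector exists
          obtain ⟨w, hwV, ⟨gw, hwg⟩, hww0⟩ := hA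
          obtain ⟨sq, hsq⟩ := IsAlgClosed.exists_pow_nat_eq (φ w w) (n := 2) (by norm_num)
          have hsqne : sq ≠ 0 := by
            intro h
            rw [h] at hsq
            simp at hsq
            exact hww0 hsq.symm
          set z0 : L := sq⁻¹ • w with hz0def
          have hz0V : z0 ∈ V := Submodule.smul_mem _ _ hwV
          have hz0g : z0 ∈ Cg gw := Submodule.smul_mem _ _ hwg
          have hz0z0 : φ z0 z0 = 1 := by
            rw [hz0def]
            simp only [map_smul, LinearMap.smul_apply, smul_eq_mul]
            rw [← hsq]
            field_simp
          set V' : Submodule F L := V ⊓ LinearMap.ker (φ.flip z0) with hV'def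
          have hV'mem : ∀ v, v ∈ V' ↔ v ∈ V ∧ φ v z0 = 0 := by
            intro v
            simp only [hV'def, Submodule.mem_inf, LinearMap.mem_ker, LinearMap.flip_apply]
          have hV'le : V' ≤ V := fun v hv => ((hV'mem v).1 hv).1
          have hV'gr : ∀ x ∈ V', ∀ g, proj g x ∈ V' := by
            intro v hv g
            have hv' := (hV'mem v).1 hv
            exact (hV'mem _).2 ⟨hVgr v hv'.1 g, horth z0 gw hz0g v hv'.2 g⟩
          have hproj2 : ∀ w2 ∈ V, w2 - φ w2 z0 • z0 ∈ V' := by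
            intro w2 hw2
            refine (hV'mem _).2 ⟨Submodule.sub_mem _ hw2 (Submodule.smul_mem _ _ hz0V), ?_⟩
            simp only [map_sub, map_smul, LinearMap.sub_apply, LinearMap.smul_apply,
              smul_eq_mul, hz0z0]
            ring
          have hV'nd : ∀ x ∈ V', (∀ y ∈ V', φ x y = 0) → x = 0 := by
            intro v hv hvy
            apply hVnd v (hV'le hv)
            intro w2 hw2
            have h1 := hvy _ (hproj2 w2 hw2)
            have hv' := (hV'mem v).1 hv
            simp only [map_sub, map_smul, smul_eq_mul] at h1
            linear_combination h1 + φ w2 z0 * hv'.2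
          have hlt : V' < V := by
            rw [SetLike.lt_iff_le_and_exists]
            refine ⟨hV'le, z0, hz0V, fun hc => ?_⟩
            have h2 := ((hV'mem z0).1 hc).2
            rw [hz0z0] at h2
            exact one_ne_zero h2
          have hdim' : Module.finrank F V' ≤ n := by
            have := Submodule.finrank_lt_finrank_of_lt hlt
            omega
          obtain ⟨r, q, u, zs, huV', hzsV', huhom', hzshom', hugram', huzs', hzsu', hzsgram',
            hospan'⟩ := ih V' (le_trans hV'le hVE1) hV'gr hV'nd hdim'
          have hsymV : ∀ x ∈ V, ∀ y ∈ V, φ x y = φ y x := fun x hx y hy =>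
            hsym1 x (hVE1 hx) y (hVE1 hy)
          refine ⟨r, q + 1, u, Fin.cons z0 zs, fun j s => hV'le (huV' j s), ?_, huhom', ?_,
            hugram', ?_, ?_, ?_, ?_⟩
          · intro l
            induction l using Fin.cases with
            | zero => rw [Fin.cons_zero]; exact hz0V
            | succ l' => rw [Fin.cons_succ]; exact hV'le (hzsV' l')
          · intro l
            induction l using Fin.cases with
            | zero => rw [Fin.cons_zero]; exact ⟨gw, hz0g⟩
            | succ l' => rw [Fin.cons_succ]; exact hzshom' l'
          · intro j s l
            induction l using Fin.cases with
            | zero =>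
              rw [Fin.cons_zero]
              exact hsymV z0 hz0V _ (hV'le (huV' j s)) ▸ ((hV'mem _).1 (huV' j s)).2
            | succ l' => rw [Fin.cons_succ]; exact huzs' j s l'
          · intro l j s
            induction l using Fin.cases with
            | zero =>
              rw [Fin.cons_zero]
              rw [hsymV z0 hz0V _ (hV'le (huV' j s))]
              exact ((hV'mem _).1 (huV' j s)).2
            | succ l' => rw [Fin.cons_succ]; exact hzsu' l' j s
          · intro l l'
            induction l using Fin.cases with
            | zero =>
              induction l' using Fin.cases with
              | zero => rw [Fin.cons_zero]; simp [hz0z0]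
              | succ l2 =>
                rw [Fin.cons_zero, Fin.cons_succ]
                rw [hsymV z0 hz0V _ (hV'le (hzsV' l2)), ((hV'mem _).1 (hzsV' l2)).2,
                  if_neg (by intro h; exact Fin.succ_ne_zero l2 h.symm)]
            | succ l2 =>
              induction l' using Fin.cases with
              | zero =>
                rw [Fin.cons_succ, Fin.cons_zero, ((hV'mem _).1 (hzsV' l2)).2,
                  if_neg (Fin.succ_ne_zero l2)]
              | succ l3 =>
                rw [Fin.cons_succ, Fin.cons_succ, hzsgram' l2 l3]
                simp only [Fin.succ_inj]
          · apply le_antisymm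
            · rw [Submodule.span_le]
              intro w2 hw2
              rcases hw2 with ⟨p, rfl⟩ | ⟨l, rfl⟩
              · exact hV'le (huV' p.1 p.2)
              · induction l using Fin.cases with
                | zero => rw [Fin.cons_zero]; exact hz0V
                | succ l' => rw [Fin.cons_succ]; exact hV'le (hzsV' l')
            · intro w2 hw2
              have hw' := hproj2 w2 hw2
              rw [← hospan'] at hw'
              have hsub : Submodule.span F
                  ((Set.range fun p : Fin r × Bool => u p.1 p.2) ∪ Set.range zs) ≤
                  Submodule.span F ((Set.range fun p : Fin r × Bool => u p.1 p.2) ∪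
                    Set.range (Fin.cons (α := fun _ => L) z0 zs)) := by
                apply Submodule.span_mono
                apply Set.union_subset_union_right
                rintro w3 ⟨l, rfl⟩
                exact ⟨l.succ, by rw [Fin.cons_succ]⟩
              have hz0mem : z0 ∈ Submodule.span F
                  ((Set.range fun p : Fin r × Bool => u p.1 p.2) ∪
                    Set.range (Fin.cons (α := fun _ => L) z0 zs)) :=
                Submodule.subset_span (Or.inr ⟨0, by rw [Fin.cons_zero]⟩)
              have hwid : w2 = (w2 - φ w2 z0 • z0) + φ w2 z0 • z0 := by abel
              rw [hwid]
              exact Submodule.add_mem _ (hsub hw') (Submodule.smul_mem _ _ hz0mem)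
        · -- all homogeneous vectors are isotropic
          push_neg at hA
          obtain ⟨x0, hx0V, hx0ne⟩ := Submodule.exists_mem_ne_zero_of_ne_bot hbot
          have hx0not : x0 ∉ (⊥ : Submodule F L) := by
            rw [Submodule.mem_bot]; exact hx0ne
          obtain ⟨x1, hx1V, ⟨gx, hx1g⟩, hx1not⟩ := hpick V hVgr ⊥ x0 hx0V hx0not
          have hx1ne : x1 ≠ 0 := by
            intro h; exact hx1not (by rw [h]; exact Submodule.zero_mem _)
          have hx1x1 : φ x1 x1 = 0 := hA x1 hx1V ⟨gx, hx1g⟩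
          have hx1rad : ¬ (∀ y ∈ V, φ x1 y = 0) := by
            intro hcon
            exact hx1ne (hVnd x1 hx1V hcon)
          push_neg at hx1rad
          obtain ⟨y0, hy0V, hy0φ⟩ := hx1rad
          obtain ⟨y1, hy1V, ⟨gy, hy1g⟩, hy1φ⟩ := hpair V hVgr x1 y0 hy0V hy0φ
          have hy1y1 : φ y1 y1 = 0 := hA y1 hy1V ⟨gy, hy1g⟩
          set u0 : L := x1 with hu0def
          set v0 : L := (φ x1 y1)⁻¹ • y1 with hv0def
          have hu0V : u0 ∈ V := hx1V
          have hv0V : v0 ∈ V := Submodule.smul_mem _ _ hy1V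
          have hv0g : v0 ∈ Cg gy := Submodule.smul_mem _ _ hy1g
          have huv : φ u0 v0 = 1 := by
            rw [hv0def, map_smul, smul_eq_mul, inv_mul_cancel₀ hy1φ]
          have hvu : φ v0 u0 = 1 := by
            rw [hsym1 v0 (hVE1 hv0V) u0 (hVE1 hu0V), huv]
          have huu : φ u0 u0 = 0 := hx1x1
          have hvv : φ v0 v0 = 0 := by
            rw [hv0def]
            simp only [map_smul, LinearMap.smul_apply, smul_eq_mul]
            rw [hy1y1]
            ring
          set V' : Submodule F L :=
            V ⊓ LinearMap.ker (φ.flip u0) ⊓ LinearMap.ker (φ.flip v0) with hV'def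
          have hV'mem : ∀ v, v ∈ V' ↔ v ∈ V ∧ φ v u0 = 0 ∧ φ v v0 = 0 := by
            intro v
            simp only [hV'def, Submodule.mem_inf, LinearMap.mem_ker, LinearMap.flip_apply,
              and_assoc]
          have hV'le : V' ≤ V := fun v hv => ((hV'mem v).1 hv).1
          have hV'gr : ∀ x ∈ V', ∀ g, proj g x ∈ V' := by
            intro v hv g
            have hv' := (hV'mem v).1 hv
            exact (hV'mem _).2 ⟨hVgr v hv'.1 g, horth u0 gx hx1g v hv'.2.1 g,
              horth v0 gy hv0g v hv'.2.2 g⟩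
          have hproj2 : ∀ w2 ∈ V, w2 - φ w2 v0 • u0 - φ w2 u0 • v0 ∈ V' := by
            intro w2 hw2
            refine (hV'mem _).2 ⟨?_, ?_, ?_⟩
            · exact Submodule.sub_mem _
                (Submodule.sub_mem _ hw2 (Submodule.smul_mem _ _ hu0V))
                (Submodule.smul_mem _ _ hv0V)
            · simp only [map_sub, map_smul, LinearMap.sub_apply, LinearMap.smul_apply,
                smul_eq_mul, huu, hvu]
              ring
            · simp only [map_sub, map_smul, LinearMap.sub_apply, LinearMap.smul_apply,
                smul_eq_mul, hvv, huv]
              ring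
          have hV'nd : ∀ x ∈ V', (∀ y ∈ V', φ x y = 0) → x = 0 := by
            intro v hv hvy
            apply hVnd v (hV'le hv)
            intro w2 hw2
            have h1 := hvy _ (hproj2 w2 hw2)
            have hv' := (hV'mem v).1 hv
            simp only [map_sub, map_smul, smul_eq_mul] at h1
            linear_combination h1 + φ w2 v0 * hv'.2.1 + φ w2 u0 * hv'.2.2
          have hlt : V' < V := by
            rw [SetLike.lt_iff_le_and_exists]
            refine ⟨hV'le, u0, hu0V, fun hc => ?_⟩
            have h2 := ((hV'mem u0).1 hc).2.2
            rw [huv] at h2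
            exact one_ne_zero h2
          have hdim' : Module.finrank F V' ≤ n := by
            have := Submodule.finrank_lt_finrank_of_lt hlt
            omega
          obtain ⟨r, q, u, zs, huV', hzsV', huhom', hzshom', hugram', huzs', hzsu', hzsgram',
            hospan'⟩ := ih V' (le_trans hV'le hVE1) hV'gr hV'nd hdim'
          have hsymV : ∀ x ∈ V, ∀ y ∈ V, φ x y = φ y x := fun x hx y hy =>
            hsym1 x (hVE1 hx) y (hVE1 hy)
          have hifV : ∀ s : Bool, (if s then v0 else u0) ∈ V := by
            intro s
            cases s
            · simpa using hu0V
            · simpa using hv0V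
          have hmemAll : ∀ (j : Fin (r+1)) (s : Bool),
              Fin.cons (α := fun _ => Bool → L) (fun s => if s then v0 else u0) u j s ∈ V := by
            intro j s
            induction j using Fin.cases with
            | zero =>
              rw [Fin.cons_zero]
              cases s
              · simpa using hu0V
              · simpa using hv0V
            | succ j' => rw [Fin.cons_succ]; exact hV'le (huV' j' s)
          refine ⟨r + 1, q, Fin.cons (fun s => if s then v0 else u0) u, zs, hmemAll,
            fun l => hV'le (hzsV' l), ?_, hzshom', ?_, ?_, ?_, hzsgram', ?_⟩
          · intro j s
            induction j using Fin.cases with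
            | zero =>
              rw [Fin.cons_zero]
              cases s
              · exact ⟨gx, by simpa using hx1g⟩
              · exact ⟨gy, by simpa using hv0g⟩
            | succ j' => rw [Fin.cons_succ]; exact huhom' j' s
          · intro j s j' t
            induction j using Fin.cases with
            | zero =>
              induction j' using Fin.cases with
              | zero =>
                rw [Fin.cons_zero]
                cases s <;> cases t <;> simp [huv, hvu, huu, hvv]
              | succ j2 =>
                rw [Fin.cons_zero, Fin.cons_succ]
                have hjV' := (hV'mem _).1 (huV' j2 t)
                have h1 : φ (if s then v0 else u0) (u j2 t) = 0 := by
                  rw [hsymV _ (hifV s) _ (hV'le (huV' j2 t))]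
                  cases s
                  · simpa using hjV'.2.1
                  · simpa using hjV'.2.2
                rw [h1, if_neg (by rintro ⟨h, _⟩; exact Fin.succ_ne_zero j2 h.symm)]
            | succ j2 =>
              induction j' using Fin.cases with
              | zero =>
                rw [Fin.cons_succ, Fin.cons_zero]
                have hjV' := (hV'mem _).1 (huV' j2 s)
                have h1 : φ (u j2 s) (if t then v0 else u0) = 0 := by
                  cases t
                  · simpa using hjV'.2.1
                  · simpa using hjV'.2.2
                rw [h1, if_neg (by rintro ⟨h, _⟩; exact Fin.succ_ne_zero j2 h)]
              | succ j3 =>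
                rw [Fin.cons_succ, Fin.cons_succ, hugram' j2 s j3 t]
                simp only [Fin.succ_inj]
          · intro j s l
            induction j using Fin.cases with
            | zero =>
              rw [Fin.cons_zero]
              rw [hsymV _ (hifV s) _ (hV'le (hzsV' l))]
              cases s
              · simpa using ((hV'mem _).1 (hzsV' l)).2.1
              · simpa using ((hV'mem _).1 (hzsV' l)).2.2
            | succ j' => rw [Fin.cons_succ]; exact huzs' j' s l
          · intro l j s
            induction j using Fin.cases with
            | zero =>
              rw [Fin.cons_zero]
              cases s
              · simpa using ((hV'mem _).1 (hzsV' l)).2.1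
              · simpa using ((hV'mem _).1 (hzsV' l)).2.2
            | succ j' => rw [Fin.cons_succ]; exact hzsu' l j' s
          · apply le_antisymm
            · rw [Submodule.span_le]
              intro w2 hw2
              rcases hw2 with ⟨p, rfl⟩ | ⟨l, rfl⟩
              · exact hmemAll p.1 p.2
              · exact hV'le (hzsV' l)
            · intro w2 hw2
              have hw' := hproj2 w2 hw2
              rw [← hospan'] at hw'
              have hsub : Submodule.span F
                  ((Set.range fun p : Fin r × Bool => u p.1 p.2) ∪ Set.range zs) ≤
                  Submodule.span F ((Set.range fun p : Fin (r+1) × Bool =>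
                    Fin.cons (α := fun _ => Bool → L) (fun s => if s then v0 else u0) u p.1 p.2) ∪
                    Set.range zs) := by
                apply Submodule.span_mono
                apply Set.union_subset_union_left
                rintro w3 ⟨p, rfl⟩
                exact ⟨(p.1.succ, p.2), by simp⟩
              have hu0mem : u0 ∈ Submodule.span F ((Set.range fun p : Fin (r+1) × Bool =>
                  Fin.cons (α := fun _ => Bool → L) (fun s => if s then v0 else u0) u p.1 p.2) ∪
                  Set.range zs) :=
                Submodule.subset_span (Or.inl ⟨((0 : Fin (r+1)), false), by simp⟩)
              have hv0mem : v0 ∈ Submodule.span F ((Set.range fun p : Fin (r+1) × Bool =>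
                  Fin.cons (α := fun _ => Bool → L) (fun s => if s then v0 else u0) u p.1 p.2) ∪
                  Set.range zs) :=
                Submodule.subset_span (Or.inl ⟨((0 : Fin (r+1)), true), by simp⟩)
              have hwid : w2 = (w2 - φ w2 v0 • u0 - φ w2 u0 • v0) + φ w2 v0 • u0
                  + φ w2 u0 • v0 := by abel
              rw [hwid]
              exact Submodule.add_mem _ (Submodule.add_mem _ (hsub hw')
                (Submodule.smul_mem _ _ hu0mem)) (Submodule.smul_mem _ _ hv0mem)
  -- apply the even lemma to E0
  obtain ⟨k', e, heV, hehom, hegram, hespan⟩ :=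
    evenlem (Module.finrank F E0) E0 le_rfl grE0 (heven (Sum.inr ()))
      (by
        intro x hx hxy
        apply hrad
        intro y
        obtain ⟨y0, y1, hy0, hy1, rfl⟩ := hsplit y
        rw [map_add, hxy y0 hy0, hcross x hx y1 hy1, add_zero])
      le_rfl
  -- apply the odd lemma to E1
  obtain ⟨r, q, u, zs, huV, hzsV, huhom, hzshom, hugram, huzs, hzsu, hzsgram, hospan⟩ :=
    oddlem (Module.finrank F E1) E1 le_rfl grE1
      (by
        intro x hx hxy
        have hx' : ∀ y, φ x y = 0 := by
          intro y
          obtain ⟨y0, y1, hy0, hy1, rfl⟩ := hsplit y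
          rw [map_add, hxy y1 hy1, hcross' x hx y0 hy0, zero_add]
        obtain ⟨c, rfl⟩ := hrad x hx'
        have : c • z ∈ E0 ⊓ E1 := ⟨Submodule.smul_mem _ _ (heven (Sum.inr ())), hx⟩
        rw [hcompl.inf_eq_bot] at this
        exact this)
      le_rfl
  -- dimension bookkeeping
  have gram_indep_z : ∀ (ι : Type) (_ : Fintype ι) (v w : ι → L) (d : ι → F),
      (∀ i, d i ≠ 0) → (∀ i j, φ (v i) (w j) = if i = j then d i else 0) →
      (∀ j, φ z (w j) = 0) →
      LinearIndependent F (fun o : Option ι => Option.elim o z v) := by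
    intro ι hfin v w d hd hg hzw
    rw [Fintype.linearIndependent_iff]
    intro a ha
    have hsome : ∀ i : ι, a (some i) = 0 := by
      intro i
      have h1 : φ (∑ o, a o • Option.elim o z v) (w i) = 0 := by
        rw [ha, map_zero, LinearMap.zero_apply]
      rw [map_sum, LinearMap.sum_apply] at h1
      have h2 : ∀ o ∈ Finset.univ, φ (a o • Option.elim o z v) (w i) =
          if o = some i then a o * d i else 0 := by
        rintro (_ | o') _
        · simp only [Option.elim, map_smul, LinearMap.smul_apply, smul_eq_mul, hzw i,
            mul_zero, if_neg (by simp : (none : Option ι) ≠ some i)]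
        · rw [if_congr (show (some o' = some i) ↔ (o' = i) by simp) rfl rfl]
          simp only [Option.elim, map_smul, LinearMap.smul_apply, smul_eq_mul, hg o' i,
            mul_ite, mul_zero]
          by_cases h : o' = i
          · subst h; simp
          · simp [h]
      rw [Finset.sum_congr rfl h2, Finset.sum_ite_eq' Finset.univ (some i) _] at h1
      simp only [Finset.mem_univ, if_true] at h1
      exact (mul_eq_zero.1 h1).resolve_right (hd i)
    have hnone : a none = 0 := by
      have h3 := ha
      rw [Finset.sum_eq_single (none : Option ι)] at h3
      · exact (smul_eq_zero.1 h3).resolve_right hzne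
      · rintro (_ | o') _ hp'
        · exact absurd rfl hp'
        · rw [hsome o', zero_smul]
      · intro h; exact absurd (Finset.mem_univ _) h
    rintro (_ | o')
    · exact hnone
    · exact hsome o'
  have hdimE0 : Module.finrank F E0 = 2 * k + 1 := by
    rw [← hE0span]
    have hind := b.linearIndependent.comp Sum.inl Sum.inl_injective
    have := finrank_span_eq_card (R := F) hind
    rw [show (⇑b ∘ Sum.inl : (Fin k × Bool) ⊕ Unit → L) =
      (fun p => b (Sum.inl p)) from rfl] at this
    rw [this]
    simp only [Fintype.card_sum, Fintype.card_prod, Fintype.card_bool, Fintype.card_unit,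
      Fintype.card_fin]
    omega
  have hdimE1 : Module.finrank F E1 = m := by
    rw [← hE1span]
    have hind := b.linearIndependent.comp Sum.inr Sum.inr_injective
    have := finrank_span_eq_card (R := F) hind
    rw [show (⇑b ∘ Sum.inr : (Fin 0 × Bool) ⊕ Fin m → L) =
      (fun p => b (Sum.inr p)) from rfl] at this
    rw [this]
    simp only [Fintype.card_sum, Fintype.card_prod, Fintype.card_bool, Fintype.card_fin]
    omega
  have hkk : k' = k := by
    have hindz := gram_indep_z (Fin k' × Bool) inferInstance
      (fun p => e p.1 p.2) (fun p => e p.1 (!p.2)) (fun p => if p.2 then -1 else 1)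
      (by intro p; cases hp : p.2 <;> simp [hp])
      (by
        intro p p'
        rw [hegram p.1 p.2 p'.1 (!p'.2)]
        by_cases hc : p = p'
        · subst hc
          simp
        · rw [if_neg, if_neg hc]
          rintro ⟨h1, h2⟩
          apply hc
          exact Prod.ext h1 (Bool.not_inj h2).symm)
      (fun p => hφzl _)
    have hrange : (Set.range fun o : Option (Fin k' × Bool) =>
        Option.elim o z (fun p => e p.1 p.2)) =
        insert z (Set.range fun p : Fin k' × Bool => e p.1 p.2) := by
      ext x
      constructor
      · rintro ⟨(_ | p), rfl⟩
        · exact Set.mem_insert _ _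
        · exact Set.mem_insert_iff.2 (Or.inr ⟨p, rfl⟩)
      · intro hx
        rcases Set.mem_insert_iff.1 hx with rfl | ⟨p, rfl⟩
        · exact ⟨none, rfl⟩
        · exact ⟨some p, rfl⟩
    have h1 : Module.finrank F E0 = 2 * k' + 1 := by
      rw [← hespan, ← hrange, finrank_span_eq_card hindz]
      simp only [Fintype.card_option, Fintype.card_prod, Fintype.card_bool, Fintype.card_fin]
      omega
    omega
  subst hkk
  have hrq : 2 * r + q = m := by
    have hindo := gram_indep ((Fin r × Bool) ⊕ Fin q) inferInstance
      (Sum.elim (fun p : Fin r × Bool => u p.1 p.2) zs)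
      (Sum.elim (fun p : Fin r × Bool => u p.1 (!p.2)) zs)
      (fun _ => 1) (fun _ => one_ne_zero)
      (by
        rintro (p | l) (p' | l')
        · simp only [Sum.elim_inl]
          rw [hugram p.1 p.2 p'.1 (!p'.2)]
          by_cases hc : p = p'
          · subst hc
            simp
          · rw [if_neg, if_neg (by simpa using hc)]
            rintro ⟨h1, h2⟩
            exact hc (Prod.ext h1 (Bool.not_inj h2).symm)
        · simp only [Sum.elim_inl, Sum.elim_inr]
          rw [huzs p.1 p.2 l', if_neg (by simp)]
        · simp only [Sum.elim_inl, Sum.elim_inr]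
          rw [hzsu l p'.1 (!p'.2), if_neg (by simp)]
        · simp only [Sum.elim_inr]
          rw [hzsgram l l']
          by_cases hc : l = l'
          · subst hc; simp
          · rw [if_neg hc, if_neg (by simpa using hc)])
    have hrange : (Set.range (Sum.elim (fun p : Fin r × Bool => u p.1 p.2) zs)) =
        (Set.range fun p : Fin r × Bool => u p.1 p.2) ∪ Set.range zs := by
      rw [Set.Sum.elim_range]
    have h1 : Module.finrank F E1 = 2 * r + q := by
      rw [← hospan, ← hrange, finrank_span_eq_card hindo]
      simp only [Fintype.card_sum, Fintype.card_prod, Fintype.card_bool, Fintype.card_fin]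
      omega
    omega
  -- assemble the basis
  set cfun : SupIdx k' r q → L := Sum.elim
      (Sum.elim (fun p : Fin k' × Bool => e p.1 p.2) (fun _ => z))
      (Sum.elim (fun p : Fin r × Bool => u p.1 p.2) zs) with hcfundef
  have hφc : ∀ p p', φ (cfun p) (cfun p') = gram F p p' := by
    rintro ((⟨i,s⟩|⟨⟩)|(⟨j,s⟩|l)) ((⟨i',s'⟩|⟨⟩)|(⟨j',s'⟩|l')) <;>
      simp only [hcfundef, Sum.elim_inl, Sum.elim_inr, gram]
    · exact hegram i s i' s'
    · exact hφzr _
    · exact hcross _ (heV i s) _ (huV j' s')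
    · exact hcross _ (heV i s) _ (hzsV l')
    · exact hφzl _
    · exact hφzl _
    · exact hφzl _
    · exact hφzl _
    · exact hcross' _ (huV j s) _ (heV i' s')
    · exact hφzr _
    · exact hugram j s j' s'
    · exact huzs j s l'
    · exact hcross' _ (hzsV l) _ (heV i' s')
    · exact hφzr _
    · exact hzsu l j' s'
    · exact hzsgram l l'
  have hli : LinearIndependent F cfun := by
    rw [Fintype.linearIndependent_iff]
    intro a ha
    have hz0 : ∀ p0, p0 ≠ Sum.inl (Sum.inr ()) → a p0 = 0 := by
      intro p0 hp0
      have h1 : φ (∑ p, a p • cfun p) (cfun (partner p0)) = 0 := by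
        rw [ha, map_zero, LinearMap.zero_apply]
      rw [map_sum, LinearMap.sum_apply] at h1
      have h2 : ∀ p ∈ Finset.univ, φ (a p • cfun p) (cfun (partner p0)) =
          if p = p0 then a p * dd F p0 else 0 := by
        intro p _
        rw [map_smul, LinearMap.smul_apply, smul_eq_mul, hφc p (partner p0),
          gram_partner F p p0 hp0, mul_ite, mul_zero]
      rw [Finset.sum_congr rfl h2, Finset.sum_ite_eq' Finset.univ p0 _] at h1
      simp only [Finset.mem_univ, if_true] at h1
      exact (mul_eq_zero.1 h1).resolve_right (dd_ne_zero F p0)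
    intro p
    by_cases hp : p = Sum.inl (Sum.inr ())
    · subst hp
      have h3 := ha
      rw [Finset.sum_eq_single (Sum.inl (Sum.inr ()) : SupIdx k' r q)] at h3
      · have h4 : a (Sum.inl (Sum.inr ())) • z = 0 := h3
        exact (smul_eq_zero.1 h4).resolve_right hzne
      · intro p' _ hp'
        rw [hz0 p' hp', zero_smul]
      · intro h; exact absurd (Finset.mem_univ _) h
    · exact hz0 p hp
  have hcard : Fintype.card (SupIdx k' r q) = Module.finrank F L := by
    rw [Module.finrank_eq_card_basis b]
    simp only [Fintype.card_sum, Fintype.card_prod, Fintype.card_bool, Fintype.card_unit,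
      Fintype.card_fin]
    omega
  haveI : Nonempty (SupIdx k' r q) := ⟨Sum.inl (Sum.inr ())⟩
  refine ⟨r, q, hrq, basisOfLinearIndependentOfCardEqFinrank hli hcard, ?_, ?_, ?_, ?_, ?_, ?_, ?_, ?_⟩ <;>
    rw [show ⇑(basisOfLinearIndependentOfCardEqFinrank hli hcard) = cfun from
      coe_basisOfLinearIndependentOfCardEqFinrank hli hcard]
  · rfl
  · rintro ((⟨i,s⟩|⟨⟩)|(⟨j,s⟩|l))
    · exact hehom i s
    · exact ⟨g0, hzg0⟩
    · exact huhom j s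
    · exact hzshom l
  · rintro (⟨i,s⟩|⟨⟩)
    · exact heV i s
    · exact heven (Sum.inr ())
  · rintro (⟨j,s⟩|l)
    · exact huV j s
    · exact hzsV l
  · intro i
    rw [brφ]
    have := hφc (Sum.inl (Sum.inl (i, false))) (Sum.inl (Sum.inl (i, true)))
    rw [this]
    simp [gram]
  · intro j
    rw [brφ]
    have := hφc (Sum.inr (Sum.inl (j, false))) (Sum.inr (Sum.inl (j, true)))
    rw [this]
    simp [gram]
  · intro l
    rw [brφ]
    have := hφc (Sum.inr (Sum.inr l)) (Sum.inr (Sum.inr l))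
    rw [this]
    simp [gram]
  · intro p p' hnp
    rw [brφ, hφc p p', gram_not_supPair F p p' hnp, zero_smul]
end
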